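/- arXiv:2203.12681 — 8 statements merged into one kernel-verified Lean document; each statement's English description precedes it below -/
import Mathlib

section
/- Under the SPS iteration on a nonempty compact convex set Ω ⊆ E, suppose f : E → ℝ is convex and continuous, there is G > 0 with ‖g_k‖ ≤ G for all k ≥ 1, and the approximation errors e_k := sup_{x ∈ Ω} |f_k(x) − f(x)| satisfy e_k → 0 as k → ∞. Then liminf_{k→∞} f(x_k) = f*, where f* = min_{x ∈ Ω} f(x). -/
open scoped RealInnerProductSpace
open Filter

set_option maxHeartbeats 1000000 in
/-- Theorem 1, part 1 (pathwise): under the SPS iteration on a nonempty compact convex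
set, with uniformly bounded subgradients and SAA errors tending to zero,
`liminf f(x_k) = f* = min_{Ω} f`. -/
theorem sps_liminf_optimal {n : ℕ}
    (Ω : Set (EuclideanSpace ℝ (Fin n)))
    (hΩne : Ω.Nonempty) (hΩcomp : IsCompact Ω) (hΩconv : Convex ℝ Ω)
    (C1 C2 ζlo ζhi : ℝ)
    (hC1 : 0 < C1) (hC12 : C1 ≤ C2) (hζlo : 0 < ζlo) (hζlohi : ζlo ≤ ζhi)
    (x : ℕ → EuclideanSpace ℝ (Fin n)) (hxΩ : ∀ k, 1 ≤ k → x k ∈ Ω)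
    (fk : ℕ → EuclideanSpace ℝ (Fin n) → ℝ)
    (hfkconv : ∀ k, ConvexOn ℝ Set.univ (fk k))
    (g : ℕ → EuclideanSpace ℝ (Fin n))
    (hsub : ∀ k, 1 ≤ k → ∀ z, fk k (x k) + ⟪g k, z - x k⟫ ≤ fk k z)
    (ζ α : ℕ → ℝ)
    (hζ : ∀ k, 1 ≤ k → ζ k ∈ Set.Icc ζlo ζhi)
    (hα : ∀ k : ℕ, 1 ≤ k → α k ∈ Set.Icc (C1 / (k : ℝ)) (C2 / (k : ℝ)))
    (hproj : ∀ k, 1 ≤ k → ∀ y ∈ Ω,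
      ‖x (k + 1) - y‖ ≤ ‖(x k - (α k * ζ k) • g k) - y‖)
    (f : EuclideanSpace ℝ (Fin n) → ℝ)
    (hfconv : ConvexOn ℝ Set.univ f) (hfcont : Continuous f)
    (G : ℝ) (hG : 0 < G) (hgbd : ∀ k, 1 ≤ k → ‖g k‖ ≤ G)
    (e : ℕ → ℝ)
    (he : ∀ k, e k = sSup ((fun z => |fk k z - f z|) '' Ω))
    (helim : Tendsto e atTop (nhds 0)) :
    liminf (fun k => f (x k)) atTop = sInf (f '' Ω) := by
  classical
  -- a minimizer of f on Ω
  obtain ⟨y, hyΩ, hymin⟩ := hΩcomp.exists_isMinOn hΩne hfcont.continuousOn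
  rw [isMinOn_iff] at hymin
  have hbddBelow : BddBelow (f '' Ω) := (hΩcomp.image hfcont).bddBelow
  have hfstar : sInf (f '' Ω) = f y := by
    refine le_antisymm (csInf_le hbddBelow ⟨y, hyΩ, rfl⟩) ?_
    refine le_csInf (hΩne.image f) ?_
    rintro _ ⟨z, hz, rfl⟩
    exact hymin z hz
  rw [hfstar]
  -- upper bound for f on Ω
  obtain ⟨M, hM⟩ := (hΩcomp.image hfcont).bddAbove
  have hbdd_le : IsBoundedUnder (· ≤ ·) atTop (fun k => f (x k)) :=
    ⟨M, eventually_map.2 (eventually_atTop.2 ⟨1, fun k hk => hM ⟨x k, hxΩ k hk, rfl⟩⟩)⟩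
  have hbdd_ge : IsBoundedUnder (· ≥ ·) atTop (fun k => f (x k)) :=
    ⟨f y, eventually_map.2 (eventually_atTop.2 ⟨1, fun k hk => hymin _ (hxΩ k hk)⟩)⟩
  -- continuity of the fk's and pointwise error bound
  have hfkcont : ∀ k, Continuous (fk k) := by
    intro k
    have := (hfkconv k).continuousOn isOpen_univ
    exact continuousOn_univ.1 this
  have hek : ∀ k, ∀ z ∈ Ω, |fk k z - f z| ≤ e k := by
    intro k z hz
    rw [he k]
    exact le_csSup (hΩcomp.image (((hfkcont k).sub hfcont).abs)).bddAbove ⟨z, hz, rfl⟩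
  -- the tail of squares is summable
  have hsum2 : Summable (fun j : ℕ => 1 / ((j : ℝ) + 1) ^ 2) := by
    have h2 : Summable (fun j : ℕ => 1 / ((j : ℝ)) ^ 2) :=
      Real.summable_one_div_nat_pow.2 one_lt_two
    have := (summable_nat_add_iff 1).2 h2
    refine this.congr fun j => ?_
    push_cast
    ring
  set Ttot : ℝ := ∑' j : ℕ, 1 / ((j : ℝ) + 1) ^ 2 with hTtot
  have hTm : ∀ m : ℕ, (∑ j ∈ Finset.range m, 1 / ((j : ℝ) + 1) ^ 2) ≤ Ttot := by
    intro m
    exact Summable.sum_le_tsum (Finset.range m) (fun i _ => by positivity) hsum2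
  -- key frequent claim
  have key : ∀ ε > (0 : ℝ), ∃ᶠ k in atTop, f (x k) ≤ f y + ε := by
    intro ε hε
    by_contra hcon
    rw [not_frequently] at hcon
    simp only [not_le] at hcon
    have hev : ∀ᶠ k in atTop, (f y + ε < f (x k)) ∧ e k < ε / 4 := by
      refine hcon.and ?_
      have := helim.eventually (gt_mem_nhds (show (0:ℝ) < ε / 4 by positivity))
      filter_upwards [this] with k hk
      exact hk
    obtain ⟨K0, hK0⟩ := eventually_atTop.1 hev
    set K : ℕ := max K0 1 with hKdef
    have hK1 : 1 ≤ K := le_max_right _ _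
    have hK0K : K0 ≤ K := le_max_left _ _
    have hKpos : (0 : ℝ) < (K : ℝ) := by exact_mod_cast hK1
    set D : ℝ := ζhi ^ 2 * G ^ 2 * C2 ^ 2 with hD
    set c1 : ℝ := ε * ζlo * C1 / K with hc1def
    have hc1pos : 0 < c1 := by positivity
    -- single-step inequality
    have step : ∀ m : ℕ, ‖x (K + m + 1) - y‖ ^ 2 ≤ ‖x (K + m) - y‖ ^ 2
        - c1 * (1 / ((m : ℝ) + 1)) + D * (1 / ((m : ℝ) + 1) ^ 2) := by
      intro m
      set k := K + m with hkdef
      have hk1 : 1 ≤ k := le_trans hK1 (Nat.le_add_right K m)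
      have hkK0 : K0 ≤ k := le_trans hK0K (Nat.le_add_right K m)
      have hkR : ((k : ℝ)) = (K : ℝ) + (m : ℝ) := by push_cast [hkdef]; ring
      have hkpos : (0 : ℝ) < (k : ℝ) := by
        rw [hkR]; positivity
      obtain ⟨hα1, hα2⟩ := hα k hk1
      obtain ⟨hζ1, hζ2⟩ := hζ k hk1
      have hαpos : 0 < α k := lt_of_lt_of_le (by positivity) hα1
      have ⟨hfxk, hekb⟩ := hK0 k hkK0
      set c : ℝ := α k * ζ k with hc
      have hcnn : 0 ≤ c := mul_nonneg hαpos.le (hζlo.trans_le hζ1).le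
      -- squared projection inequality
      have h1 : ‖x (k + 1) - y‖ ^ 2 ≤ ‖(x k - c • g k) - y‖ ^ 2 := by
        have := hproj k hk1 y hyΩ
        exact pow_le_pow_left₀ (norm_nonneg _) this 2
      -- expansion
      have hexp : ‖(x k - c • g k) - y‖ ^ 2
          = ‖x k - y‖ ^ 2 - 2 * c * ⟪g k, x k - y⟫ + c ^ 2 * ‖g k‖ ^ 2 := by
        have hre : x k - c • g k - y = (x k - y) - c • g k := by
          rw [sub_right_comm]
        rw [hre, @norm_sub_sq_real]
        rw [real_inner_smul_right, real_inner_comm, norm_smul]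
        rw [mul_pow, Real.norm_eq_abs, sq_abs]
        ring
      -- subgradient and error bound
      have hipb : ε / 2 ≤ ⟪g k, x k - y⟫ := by
        have hs := hsub k hk1 y
        have hrw : ⟪g k, y - x k⟫ = -⟪g k, x k - y⟫ := by
          rw [← inner_neg_right, neg_sub]
        rw [hrw] at hs
        have he1 := abs_le.1 (hek k (x k) (hxΩ k hk1))
        have he2 := abs_le.1 (hek k y hyΩ)
        linarith [he1.1, he1.2, he2.1, he2.2]
      -- inner product term
      have hA : α k * ζlo * ε ≤ 2 * c * ⟪g k, x k - y⟫ := by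
        have h0 : α k * ζlo ≤ c := mul_le_mul_of_nonneg_left hζ1 hαpos.le
        have h1' : α k * ζlo * (ε / 2) ≤ c * ⟪g k, x k - y⟫ :=
          mul_le_mul h0 hipb (by positivity) hcnn
        linarith
      -- norm term
      have hB : c ^ 2 * ‖g k‖ ^ 2 ≤ (α k * ζhi) ^ 2 * G ^ 2 := by
        have h0 : c ≤ α k * ζhi := mul_le_mul_of_nonneg_left hζ2 hαpos.le
        have h1' : c ^ 2 ≤ (α k * ζhi) ^ 2 := pow_le_pow_left₀ hcnn h0 2
        have h2' : ‖g k‖ ^ 2 ≤ G ^ 2 := pow_le_pow_left₀ (norm_nonneg _) (hgbd k hk1) 2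
        exact mul_le_mul h1' h2' (by positivity) (by positivity)
      -- α bounds
      have hm1 : (0 : ℝ) < (m : ℝ) + 1 := by positivity
      have hα1' : C1 / ((K : ℝ) * ((m : ℝ) + 1)) ≤ α k := by
        refine le_trans ?_ hα1
        have hle : (k : ℝ) ≤ (K : ℝ) * ((m : ℝ) + 1) := by
          rw [hkR]
          have hK1R : (1 : ℝ) ≤ (K : ℝ) := by exact_mod_cast hK1
          have hKm : (m : ℝ) ≤ (K : ℝ) * (m : ℝ) :=
            le_mul_of_one_le_left (Nat.cast_nonneg m) hK1R
          have hexp : (K : ℝ) * ((m : ℝ) + 1) = (K : ℝ) * (m : ℝ) + (K : ℝ) := by ring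
          linarith
        exact div_le_div_of_nonneg_left hC1.le hkpos hle
      have hα2' : α k ≤ C2 / ((m : ℝ) + 1) := by
        refine le_trans hα2 ?_
        have hle : (m : ℝ) + 1 ≤ (k : ℝ) := by
          rw [hkR]
          have : (1 : ℝ) ≤ (K : ℝ) := by exact_mod_cast hK1
          linarith
        exact div_le_div_of_nonneg_left (hC1.le.trans hC12) hm1 hle
      -- combine
      have hfin1 : c1 * (1 / ((m : ℝ) + 1)) ≤ α k * ζlo * ε := by
        have heq : c1 * (1 / ((m : ℝ) + 1))
            = C1 / ((K : ℝ) * ((m : ℝ) + 1)) * ζlo * ε := by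
          rw [hc1def]
          field_simp
        rw [heq]
        exact mul_le_mul_of_nonneg_right
          (mul_le_mul_of_nonneg_right hα1' hζlo.le) hε.le
      have hfin2 : (α k * ζhi) ^ 2 * G ^ 2 ≤ D * (1 / ((m : ℝ) + 1) ^ 2) := by
        have heq : D * (1 / ((m : ℝ) + 1) ^ 2)
            = (C2 / ((m : ℝ) + 1) * ζhi) ^ 2 * G ^ 2 := by
          rw [hD]
          field_simp
        rw [heq]
        have h0 : (0 : ℝ) ≤ α k * ζhi := mul_nonneg hαpos.le (hζlo.trans_le hζlohi).le
        have h1' : α k * ζhi ≤ C2 / ((m : ℝ) + 1) * ζhi :=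
          mul_le_mul_of_nonneg_right hα2' (hζlo.trans_le hζlohi).le
        exact mul_le_mul_of_nonneg_right (pow_le_pow_left₀ h0 h1' 2) (by positivity)
      rw [hexp] at h1
      have : (K + m) + 1 = k + 1 := by rw [hkdef]
      rw [this]
      linarith
    -- telescoped inequality
    have sum_ineq : ∀ m : ℕ, ‖x (K + m) - y‖ ^ 2
        + c1 * (∑ j ∈ Finset.range m, 1 / ((j : ℝ) + 1))
        ≤ ‖x (K + 0) - y‖ ^ 2 + D * (∑ j ∈ Finset.range m, 1 / ((j : ℝ) + 1) ^ 2) := by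
      intro m
      induction m with
      | zero => simp
      | succ m ih =>
        have hst := step m
        rw [Finset.sum_range_succ, Finset.sum_range_succ]
        have : K + (m + 1) = K + m + 1 := by ring
        rw [this]
        linarith
    -- contradiction with divergence of the harmonic series
    have hDnn : (0 : ℝ) ≤ D := by positivity
    have hbound : ∀ m : ℕ, c1 * (∑ j ∈ Finset.range m, 1 / ((j : ℝ) + 1))
        ≤ ‖x (K + 0) - y‖ ^ 2 + D * Ttot := by
      intro m
      have h1 := sum_ineq m
      have h2 := hTm m
      nlinarith [sq_nonneg ‖x (K + m) - y‖]
    have hdiv := Real.tendsto_sum_range_one_div_nat_succ_atTop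
    obtain ⟨m, hm⟩ := (hdiv.eventually_ge_atTop
      ((‖x (K + 0) - y‖ ^ 2 + D * Ttot + 1) / c1)).exists
    have := hbound m
    rw [div_le_iff₀ hc1pos] at hm
    nlinarith
  -- conclude
  refine le_antisymm ?_ ?_
  · refine le_of_forall_pos_le_add ?_
    intro ε hε
    exact liminf_le_of_frequently_le (key ε hε) hbdd_ge
  · exact le_liminf_of_le hbdd_le.isCoboundedUnder_ge
      (eventually_atTop.2 ⟨1, fun k hk => hymin _ (hxΩ k hk)⟩)
end

section
/- Under the SPS iteration on a nonempty compact convex set Ω ⊆ E, suppose f : E → ℝ is convex and continuous, there is G > 0 with ‖g_k‖ ≤ G for all k ≥ 1, and the approximation errors e_k := sup_{x ∈ Ω} |f_k(x) − f(x)| satisfy Σ_{k≥1} e_k/k < ∞. Then there exists x* ∈ Ω with f(x*) = min_{x ∈ Ω} f(x) such that x_k → x* as k → ∞. -/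
open scoped RealInnerProductSpace
open Filter

lemma sps_fejer_aux {a b : ℕ → ℝ} (ha : ∀ k, 0 ≤ a k) (hb : ∀ k, 0 ≤ b k)
    (hbs : Summable b) (h : ∀ k, 1 ≤ k → a (k + 1) ≤ a k + b k) :
    ∃ L, Tendsto a atTop (nhds L) := by
  set S : ℕ → ℝ := fun k => ∑ j ∈ Finset.range k, b j with hSdef
  have hST : Tendsto S atTop (nhds (∑' j, b j)) := hbs.hasSum.tendsto_sum_nat
  have hSle : ∀ k, S k ≤ ∑' j, b j := fun k => hbs.sum_le_tsum _ (fun j _ => hb j)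
  have hanti : Antitone (fun m : ℕ => a (m + 1) - S (m + 1)) := by
    apply antitone_nat_of_succ_le
    intro m
    have h1 := h (m + 1) (by omega)
    have h2 : S (m + 2) = S (m + 1) + b (m + 1) := Finset.sum_range_succ _ _
    have : a (m + 1 + 1) - S (m + 1 + 1) ≤ a (m + 1) - S (m + 1) := by
      have h3 : (m + 1 + 1) = m + 2 := rfl
      rw [h3, h2]; linarith
    exact this
  have hbdd : BddBelow (Set.range fun m : ℕ => a (m + 1) - S (m + 1)) := by
    refine ⟨-(∑' j, b j), ?_⟩
    rintro _ ⟨m, rfl⟩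
    have := ha (m + 1); have := hSle (m + 1); dsimp; linarith
  have hc := tendsto_atTop_ciInf hanti hbdd
  have hS1 : Tendsto (fun m : ℕ => S (m + 1)) atTop (nhds (∑' j, b j)) :=
    hST.comp (tendsto_add_atTop_nat 1)
  have h1 : Tendsto (fun m : ℕ => a (m + 1)) atTop
      (nhds ((⨅ m, (a (m + 1) - S (m + 1))) + ∑' j, b j)) := by
    have := hc.add hS1
    simpa using this
  exact ⟨_, (tendsto_add_atTop_iff_nat 1).1 h1⟩

lemma sps_summable_aux {a u b : ℕ → ℝ} (ha : ∀ k, 0 ≤ a k)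
    (hu : ∀ k, 1 ≤ k → 0 ≤ u k) (hb : ∀ k, 0 ≤ b k) (hbs : Summable b)
    (h : ∀ k, 1 ≤ k → a (k + 1) + u k ≤ a k + b k) :
    Summable u := by
  rw [← summable_nat_add_iff 1]
  apply summable_of_sum_range_le (c := a 1 + ∑' j, b j)
    (fun m => hu (m + 1) (by omega))
  intro N
  have key : ∀ M : ℕ, ∑ m ∈ Finset.range M, u (m + 1) + a (M + 1)
      ≤ a 1 + ∑ m ∈ Finset.range M, b (m + 1) := by
    intro M
    induction M with
    | zero => simp
    | succ M ih =>
      rw [Finset.sum_range_succ, Finset.sum_range_succ]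
      have := h (M + 1) (by omega)
      linarith
  have hb1 : ∑ m ∈ Finset.range N, b (m + 1) ≤ ∑' j, b j := by
    have h0 : ∑ m ∈ Finset.range (N + 1), b m
        = (∑ m ∈ Finset.range N, b (m + 1)) + b 0 := Finset.sum_range_succ' b N
    have h2 : ∑ m ∈ Finset.range (N + 1), b m ≤ ∑' j, b j :=
      hbs.sum_le_tsum _ (fun j _ => hb j)
    have := hb 0; linarith
  have := key N
  have := ha (N + 1)
  linarith

lemma sps_freq_aux {D : ℕ → ℝ}
    (hs : Summable (fun m : ℕ => D (m + 1) / ((m : ℝ) + 1))) {ε : ℝ} (hε : 0 < ε) :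
    ∃ᶠ k in atTop, D k < ε := by
  by_contra hcon
  rw [not_frequently] at hcon
  obtain ⟨N, hN⟩ := eventually_atTop.1 hcon
  have hN' : ∀ k, N ≤ k → ε ≤ D k := fun k hk => not_lt.1 (hN k hk)
  have h2 : Summable (fun m : ℕ => D (m + N + 1) / ((m : ℝ) + N + 1)) := by
    have := (summable_nat_add_iff (f := fun m : ℕ => D (m + 1) / ((m : ℝ) + 1)) N).2 hs
    refine this.congr fun m => ?_
    push_cast
    ring_nf
  have h3 : Summable (fun m : ℕ => ε / ((m : ℝ) + N + 1)) := by
    refine Summable.of_nonneg_of_le (fun m => by positivity) (fun m => ?_) h2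
    have hd : (0 : ℝ) < (m : ℝ) + N + 1 := by positivity
    exact (div_le_div_iff_of_pos_right hd).2 (hN' (m + N + 1) (by omega))
  have h4 : Summable (fun m : ℕ => ε / ((m : ℝ) + 1)) := by
    refine (summable_nat_add_iff (f := fun m : ℕ => ε / ((m : ℝ) + 1)) N).1
      (h3.congr fun m => ?_)
    push_cast
    ring_nf
  have h5 : Summable (fun m : ℕ => 1 / ((m : ℝ) + 1)) := by
    refine (h4.mul_left ε⁻¹).congr fun m => ?_
    field_simp
  exact Real.not_summable_one_div_natCast
    ((summable_nat_add_iff 1).1 (h5.congr fun m => by push_cast; ring_nf))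

set_option maxHeartbeats 1000000 in
/-- Theorem 1, part 2 (pathwise): under the SPS iteration on a nonempty compact convex
set, with uniformly bounded subgradients and summable weighted SAA errors
`Σ e_k/k < ∞`, the iterates converge to a minimizer of `f` on `Ω`. -/
theorem sps_convergence_to_solution {n : ℕ}
    (Ω : Set (EuclideanSpace ℝ (Fin n)))
    (hΩne : Ω.Nonempty) (hΩcomp : IsCompact Ω) (hΩconv : Convex ℝ Ω)
    (C1 C2 ζlo ζhi : ℝ)
    (hC1 : 0 < C1) (hC12 : C1 ≤ C2) (hζlo : 0 < ζlo) (hζlohi : ζlo ≤ ζhi)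
    (x : ℕ → EuclideanSpace ℝ (Fin n)) (hxΩ : ∀ k, 1 ≤ k → x k ∈ Ω)
    (fk : ℕ → EuclideanSpace ℝ (Fin n) → ℝ)
    (hfkconv : ∀ k, ConvexOn ℝ Set.univ (fk k))
    (g : ℕ → EuclideanSpace ℝ (Fin n))
    (hsub : ∀ k, 1 ≤ k → ∀ z, fk k (x k) + ⟪g k, z - x k⟫ ≤ fk k z)
    (ζ α : ℕ → ℝ)
    (hζ : ∀ k, 1 ≤ k → ζ k ∈ Set.Icc ζlo ζhi)
    (hα : ∀ k : ℕ, 1 ≤ k → α k ∈ Set.Icc (C1 / (k : ℝ)) (C2 / (k : ℝ)))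
    (hproj : ∀ k, 1 ≤ k → ∀ y ∈ Ω,
      ‖x (k + 1) - y‖ ≤ ‖(x k - (α k * ζ k) • g k) - y‖)
    (f : EuclideanSpace ℝ (Fin n) → ℝ)
    (hfconv : ConvexOn ℝ Set.univ f) (hfcont : Continuous f)
    (G : ℝ) (hG : 0 < G) (hgbd : ∀ k, 1 ≤ k → ‖g k‖ ≤ G)
    (e : ℕ → ℝ)
    (he : ∀ k, e k = sSup ((fun z => |fk k z - f z|) '' Ω))
    (hesum : Summable (fun k : ℕ => e k / k)) :
    ∃ xstar ∈ Ω, f xstar = sInf (f '' Ω) ∧ Tendsto x atTop (nhds xstar) := by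
  classical
  have hC2 : (0:ℝ) < C2 := lt_of_lt_of_le hC1 hC12
  have hζhi : (0:ℝ) < ζhi := lt_of_lt_of_le hζlo hζlohi
  have hfkcont : ∀ k, Continuous (fk k) := fun k =>
    continuousOn_univ.1 ((hfkconv k).continuousOn isOpen_univ)
  obtain ⟨y, hyΩ, hyminOn⟩ := hΩcomp.exists_isMinOn hΩne hfcont.continuousOn
  have hymin : ∀ z ∈ Ω, f y ≤ f z := fun z hz => isMinOn_iff.1 hyminOn z hz
  -- error bounds
  have hebd : ∀ k, ∀ z ∈ Ω, |fk k z - f z| ≤ e k := by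
    intro k z hz
    rw [he k]
    refine le_csSup ?_ ⟨z, hz, rfl⟩
    exact (hΩcomp.image_of_continuousOn
      (((hfkcont k).sub hfcont).abs.continuousOn)).bddAbove
  obtain ⟨w0, hw0⟩ := hΩne
  have he0 : ∀ k, 0 ≤ e k := fun k => le_trans (abs_nonneg _) (hebd k w0 hw0)
  -- step size facts
  have hkpos : ∀ k : ℕ, 1 ≤ k → (0:ℝ) < k := fun k hk => by
    exact_mod_cast Nat.pos_of_ne_zero (by omega)
  have ht0 : ∀ k, 1 ≤ k → 0 ≤ α k * ζ k := by
    intro k hk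
    have h1 := (hα k hk).1
    have h2 := (hζ k hk).1
    have hk0 := hkpos k hk
    have : 0 < C1 / (k:ℝ) := by positivity
    nlinarith
  have htlb : ∀ k : ℕ, 1 ≤ k → C1 * ζlo / (k:ℝ) ≤ α k * ζ k := by
    intro k hk
    have h1 := (hα k hk).1
    have h2 := (hζ k hk).1
    have hk0 := hkpos k hk
    have hα0 : 0 ≤ α k := le_trans (by positivity) h1
    have : (C1 / (k:ℝ)) * ζlo ≤ α k * ζ k :=
      mul_le_mul h1 h2 hζlo.le hα0
    calc C1 * ζlo / (k:ℝ) = (C1 / (k:ℝ)) * ζlo := by ring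
    _ ≤ α k * ζ k := this
  have htub : ∀ k, 1 ≤ k → α k * ζ k ≤ C2 * ζhi / (k:ℝ) := by
    intro k hk
    have h1 := (hα k hk).2
    have h2 := (hζ k hk).2
    have hk0 := hkpos k hk
    have hζ0 : 0 ≤ ζ k := le_trans hζlo.le (hζ k hk).1
    have : α k * ζ k ≤ (C2 / (k:ℝ)) * ζhi :=
      mul_le_mul h1 h2 hζ0 (by positivity)
    calc α k * ζ k ≤ (C2 / (k:ℝ)) * ζhi := this
    _ = C2 * ζhi / (k:ℝ) := by ring
  -- the summable perturbation
  set b : ℕ → ℝ := fun k =>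
    4 * C2 * ζhi * (e k / k) + C2 ^ 2 * ζhi ^ 2 * G ^ 2 * (1 / (k:ℝ) ^ 2) with hbdef
  have hb0 : ∀ k, 0 ≤ b k := by
    intro k
    have h1 : 0 ≤ e k / (k:ℝ) := div_nonneg (he0 k) (Nat.cast_nonneg k)
    have h2 : (0:ℝ) ≤ 1 / (k:ℝ)^2 := by positivity
    simp only [hbdef]
    have h3 : 0 ≤ 4 * C2 * ζhi * (e k / (k:ℝ)) :=
      mul_nonneg (by positivity) h1
    have h4 : (0:ℝ) ≤ C2 ^ 2 * ζhi ^ 2 * G ^ 2 * (1 / (k:ℝ) ^ 2) := by positivity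
    linarith
  have hbs : Summable b := by
    refine Summable.add (hesum.mul_left (4 * C2 * ζhi)) ?_
    exact (Real.summable_one_div_nat_pow.2 one_lt_two).mul_left _
  -- key per-step inequality
  have key : ∀ z ∈ Ω, (∀ w ∈ Ω, f z ≤ f w) → ∀ k, 1 ≤ k →
      ‖x (k + 1) - z‖ ^ 2 + 2 * (α k * ζ k) * (f (x k) - f z)
        ≤ ‖x k - z‖ ^ 2 + b k := by
    intro z hzΩ hzmin k hk
    obtain ⟨t, htdef⟩ : ∃ t, α k * ζ k = t := ⟨_, rfl⟩
    rw [htdef]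
    have hk0 : (0:ℝ) < k := hkpos k hk
    have ht0' : 0 ≤ t := htdef ▸ ht0 k hk
    have htub' : t ≤ C2 * ζhi / (k:ℝ) := htdef ▸ htub k hk
    have h1 : ‖x (k + 1) - z‖ ≤ ‖(x k - z) - t • g k‖ := by
      have h := hproj k hk z hzΩ
      rw [htdef] at h
      have hrw : x k - t • g k - z = x k - z - t • g k := by abel
      rwa [hrw] at h
    have h1sq : ‖x (k + 1) - z‖ ^ 2 ≤ ‖(x k - z) - t • g k‖ ^ 2 :=
      pow_le_pow_left₀ (norm_nonneg _) h1 2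
    have h2 : ‖(x k - z) - t • g k‖ ^ 2
        = ‖x k - z‖ ^ 2 - 2 * t * ⟪g k, x k - z⟫ + t ^ 2 * ‖g k‖ ^ 2 := by
      rw [norm_sub_sq_real, real_inner_smul_right, real_inner_comm, norm_smul]
      simp only [Real.norm_eq_abs, mul_pow, sq_abs]
      ring
    have h3 : fk k (x k) - fk k z ≤ ⟪g k, x k - z⟫ := by
      have hs := hsub k hk z
      have hrw : ⟪g k, z - x k⟫ = -⟪g k, x k - z⟫ := by
        rw [← neg_sub (x k) z, inner_neg_right]
      rw [hrw] at hs
      linarith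
    have hx1 := hebd k (x k) (hxΩ k hk)
    have hx2 := hebd k z hzΩ
    rw [abs_le] at hx1 hx2
    have h4 : f (x k) - f z - 2 * e k ≤ ⟪g k, x k - z⟫ := by
      linarith [hx1.1, hx1.2, hx2.1, hx2.2]
    have h5 : t ^ 2 * ‖g k‖ ^ 2 ≤ (C2 * ζhi / (k:ℝ)) ^ 2 * G ^ 2 := by
      have hg := hgbd k hk
      exact mul_le_mul (pow_le_pow_left₀ ht0' htub' 2)
        (pow_le_pow_left₀ (norm_nonneg _) hg 2) (by positivity) (by positivity)
    have h6 : 2 * t * (f (x k) - f z - 2 * e k) ≤ 2 * t * ⟪g k, x k - z⟫ :=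
      mul_le_mul_of_nonneg_left h4 (by linarith)
    have h7 : t * e k ≤ (C2 * ζhi / (k:ℝ)) * e k :=
      mul_le_mul_of_nonneg_right htub' (he0 k)
    have hbk : b k = 4 * (C2 * ζhi / (k:ℝ)) * e k + (C2 * ζhi / (k:ℝ)) ^ 2 * G ^ 2 := by
      simp only [hbdef]
      ring
    rw [h2] at h1sq
    rw [hbk]
    linarith [h1sq, h5, h6, h7]
  -- summability of the gap sequence
  have hD : ∀ k, 1 ≤ k → 0 ≤ f (x k) - f y := fun k hk =>
    sub_nonneg.2 (hymin _ (hxΩ k hk))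
  have husum : Summable (fun k => 2 * (α k * ζ k) * (f (x k) - f y)) := by
    refine sps_summable_aux (a := fun k => ‖x k - y‖ ^ 2) (fun k => by positivity)
      (fun k hk => mul_nonneg (mul_nonneg (by norm_num) (ht0 k hk)) (hD k hk))
      hb0 hbs (fun k hk => key y hyΩ hymin k hk)
  have hc : (0:ℝ) < 2 * C1 * ζlo := by positivity
  have hDsum : Summable (fun m : ℕ => (f (x (m + 1)) - f y) / ((m:ℝ) + 1)) := by
    have hus : Summable (fun m : ℕ =>
        (2 * (α (m + 1) * ζ (m + 1)) * (f (x (m + 1)) - f y)) / (2 * C1 * ζlo)) :=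
      ((summable_nat_add_iff 1).2 husum).div_const _
    refine Summable.of_nonneg_of_le (fun m => ?_) (fun m => ?_) hus
    · have := hD (m + 1) (by omega)
      positivity
    · rw [le_div_iff₀ hc]
      have hl := htlb (m + 1) (by omega)
      have hcast : (((m:ℕ) + 1 : ℕ) : ℝ) = (m:ℝ) + 1 := by push_cast; ring
      rw [hcast] at hl
      have hD' := hD (m + 1) (by omega)
      have := mul_le_mul_of_nonneg_right hl hD'
      have hm0 : (0:ℝ) < (m:ℝ) + 1 := by positivity
      rw [div_mul_eq_mul_div, div_le_iff₀ hm0] at this ⊢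
      nlinarith
  -- frequently small gap, extraction
  have hfreq : ∀ m : ℕ, ∃ᶠ k in atTop, (f (x k) - f y < 1 / ((m:ℝ) + 1) ∧ 1 ≤ k) := by
    intro m
    exact (sps_freq_aux (D := fun k => f (x k) - f y) hDsum (by positivity)).and_eventually (eventually_ge_atTop 1)
  obtain ⟨φ, hφmono, hφ⟩ := extraction_forall_of_frequently hfreq
  obtain ⟨xbar, hxbarΩ, ψ, hψmono, hψtend⟩ :=
    hΩcomp.tendsto_subseq (x := fun m => x (φ m)) (fun m => hxΩ _ (hφ m).2)
  -- xbar is a minimizer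
  have hψge : ∀ m : ℕ, (m:ℝ) ≤ ψ m := fun m => by exact_mod_cast hψmono.le_apply
  have hfxbar : f xbar = f y := by
    have ht1 : Tendsto (fun m => f (x (φ (ψ m)))) atTop (nhds (f xbar)) :=
      (hfcont.tendsto xbar).comp hψtend
    have hub : Tendsto (fun m : ℕ => f y + 1 / ((m:ℝ) + 1)) atTop (nhds (f y)) := by
      have h := Tendsto.add
        (tendsto_const_nhds : Tendsto (fun _ : ℕ => f y) atTop (nhds (f y)))
        tendsto_one_div_add_atTop_nhds_zero_nat
      simpa using h
    have ht2 : Tendsto (fun m => f (x (φ (ψ m)))) atTop (nhds (f y)) := by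
      refine tendsto_of_tendsto_of_tendsto_of_le_of_le tendsto_const_nhds hub
        (fun m => hymin _ (hxΩ _ (hφ (ψ m)).2)) (fun m => ?_)
      have h1 := (hφ (ψ m)).1
      have h2 : 1 / ((ψ m : ℝ) + 1) ≤ 1 / ((m:ℝ) + 1) := by
        apply one_div_le_one_div_of_le (by positivity)
        have := hψge m; linarith
      linarith
    exact tendsto_nhds_unique ht1 ht2
  have hxbarmin : ∀ w ∈ Ω, f xbar ≤ f w := fun w hw => hfxbar ▸ hymin w hw
  have hsinf : f xbar = sInf (f '' Ω) := by
    have hmem : f xbar ∈ f '' Ω := ⟨xbar, hxbarΩ, rfl⟩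
    have hlb : f xbar ∈ lowerBounds (f '' Ω) := by
      rintro _ ⟨z, hz, rfl⟩
      exact hxbarmin z hz
    exact (IsLeast.csInf_eq ⟨hmem, hlb⟩).symm
  -- quasi-Fejér with xbar
  obtain ⟨L, hL⟩ := sps_fejer_aux (a := fun k => ‖x k - xbar‖ ^ 2)
    (fun k => by positivity) hb0 hbs
    (fun k hk => by
      show ‖x (k + 1) - xbar‖ ^ 2 ≤ ‖x k - xbar‖ ^ 2 + b k
      have h := key xbar hxbarΩ hxbarmin k hk
      have h1 := ht0 k hk
      have h2 : 0 ≤ f (x k) - f xbar := sub_nonneg.2 (hxbarmin _ (hxΩ k hk))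
      have h3 : 0 ≤ α k * ζ k * (f (x k) - f xbar) := mul_nonneg h1 h2
      linarith)
  have hsub0 : Tendsto (fun m => ‖x (φ (ψ m)) - xbar‖ ^ 2) atTop (nhds 0) := by
    have h1 : Tendsto (fun m => x (φ (ψ m)) - xbar) atTop (nhds 0) := by
      simpa using hψtend.sub (tendsto_const_nhds : Tendsto (fun _ : ℕ => xbar) atTop (nhds xbar))
    have h2 := (h1.norm).pow 2
    simpa using h2
  have hLsub : Tendsto (fun m => ‖x (φ (ψ m)) - xbar‖ ^ 2) atTop (nhds L) :=
    hL.comp ((hφmono.comp hψmono).tendsto_atTop)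
  have hL0 : L = 0 := tendsto_nhds_unique hLsub hsub0
  rw [hL0] at hL
  have hnorm0 : Tendsto (fun k => ‖x k - xbar‖) atTop (nhds 0) := by
    have hsq : Tendsto (fun k => Real.sqrt (‖x k - xbar‖ ^ 2)) atTop
        (nhds (Real.sqrt 0)) := (Real.continuous_sqrt.tendsto 0).comp hL
    simpa [Real.sqrt_sq, norm_nonneg] using hsq
  exact ⟨xbar, hxbarΩ, hsinf, tendsto_iff_norm_sub_tendsto_zero.2 hnorm0⟩
end

section
/- Under the SPS iteration on a nonempty compact convex set Ω ⊆ E, suppose f : E → ℝ is convex and there exists K ∈ ℕ such that f_k = f for all k ≥ K (the full sample is eventually reached and retained). Then the sequence x_k converges to some x* ∈ Ω with f(x*) = min_{x ∈ Ω} f(x). -/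
open scoped RealInnerProductSpace
open Filter

/-- Corollary 1 (finite sum problems): under the SPS iteration on a nonempty compact
convex set, if the full sample is eventually reached and retained (`f_k = f` for all
`k ≥ K`), then the iterates converge to a minimizer of `f` on `Ω`. -/
theorem sps_finite_sum_convergence {n : ℕ}
    (Ω : Set (EuclideanSpace ℝ (Fin n)))
    (hΩne : Ω.Nonempty) (hΩcomp : IsCompact Ω) (hΩconv : Convex ℝ Ω)
    (C1 C2 ζlo ζhi : ℝ)
    (hC1 : 0 < C1) (hC12 : C1 ≤ C2) (hζlo : 0 < ζlo) (hζlohi : ζlo ≤ ζhi)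
    (x : ℕ → EuclideanSpace ℝ (Fin n)) (hxΩ : ∀ k, 1 ≤ k → x k ∈ Ω)
    (fk : ℕ → EuclideanSpace ℝ (Fin n) → ℝ)
    (hfkconv : ∀ k, ConvexOn ℝ Set.univ (fk k))
    (g : ℕ → EuclideanSpace ℝ (Fin n))
    (hsub : ∀ k, 1 ≤ k → ∀ z, fk k (x k) + ⟪g k, z - x k⟫ ≤ fk k z)
    (ζ α : ℕ → ℝ)
    (hζ : ∀ k, 1 ≤ k → ζ k ∈ Set.Icc ζlo ζhi)
    (hα : ∀ k : ℕ, 1 ≤ k → α k ∈ Set.Icc (C1 / (k : ℝ)) (C2 / (k : ℝ)))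
    (hproj : ∀ k, 1 ≤ k → ∀ y ∈ Ω,
      ‖x (k + 1) - y‖ ≤ ‖(x k - (α k * ζ k) • g k) - y‖)
    (f : EuclideanSpace ℝ (Fin n) → ℝ)
    (hfconv : ConvexOn ℝ Set.univ f)
    (hfull : ∃ K : ℕ, ∀ k, K ≤ k → fk k = f) :
    ∃ xstar ∈ Ω, f xstar = sInf (f '' Ω) ∧ Tendsto x atTop (nhds xstar) := by
  classical
  obtain ⟨K0, hK0⟩ := hfull
  set K : ℕ := max K0 1 with hKdef
  have hK1 : 1 ≤ K := le_max_right _ _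
  have hfk_eq : ∀ k, K ≤ k → fk k = f := fun k hk => hK0 k ((le_max_left _ _).trans hk)
  -- continuity of f
  have hfc : Continuous f := hfconv.locallyLipschitz.continuous
  -- minimizer of f on Ω
  obtain ⟨ys, hysΩ, hysmin⟩ := hΩcomp.exists_isMinOn hΩne hfc.continuousOn
  have hsInf : f ys = sInf (f '' Ω) := by
    apply le_antisymm
    · apply le_csInf (hΩne.image f)
      rintro b ⟨z, hz, rfl⟩
      exact hysmin hz
    · exact csInf_le ⟨f ys, by rintro b ⟨z, hz, rfl⟩; exact hysmin hz⟩ ⟨ys, hysΩ, rfl⟩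
  -- basic positivity facts
  have hkpos : ∀ k : ℕ, 1 ≤ k → (0 : ℝ) < k := by
    intro k hk; exact_mod_cast hk
  have hαpos : ∀ k, 1 ≤ k → 0 < α k :=
    fun k hk => lt_of_lt_of_le (div_pos hC1 (hkpos k hk)) (hα k hk).1
  have hζpos : ∀ k, 1 ≤ k → 0 < ζ k := fun k hk => lt_of_lt_of_le hζlo (hζ k hk).1
  have hcpos : ∀ k, 1 ≤ k → 0 < α k * ζ k := fun k hk => mul_pos (hαpos k hk) (hζpos k hk)
  -- bound on subgradient norms
  obtain ⟨G, hG0, hGb⟩ : ∃ G, 0 ≤ G ∧ ∀ k, K ≤ k → ‖g k‖ ≤ G := by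
    set T := Metric.cthickening 1 Ω with hT
    have hTc : IsCompact T := hΩcomp.cthickening
    have hTne : T.Nonempty := hΩne.mono (Metric.self_subset_cthickening Ω)
    obtain ⟨w, hwT, hwmax⟩ := hTc.exists_isMaxOn hTne hfc.continuousOn
    refine ⟨max (f w - f ys) 0, le_max_right _ _, ?_⟩
    intro k hk
    have hk1 : 1 ≤ k := hK1.trans hk
    have hxk : x k ∈ Ω := hxΩ k hk1
    rcases eq_or_ne (g k) 0 with hg | hg
    · simp [hg]
    · have hgpos : 0 < ‖g k‖ := norm_pos_iff.mpr hg
      set u : EuclideanSpace ℝ (Fin n) := ‖g k‖⁻¹ • g k with hu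
      have hun : ‖u‖ = 1 := by
        rw [hu, norm_smul, norm_inv, norm_norm, inv_mul_cancel₀ (ne_of_gt hgpos)]
      set z := x k + u with hz
      have hzT : z ∈ T := by
        apply Metric.mem_cthickening_of_dist_le z (x k) 1 Ω hxk
        rw [dist_eq_norm]
        have : z - x k = u := by rw [hz]; abel
        rw [this, hun]
      have hsubz := hsub k hk1 z
      rw [hfk_eq k hk] at hsubz
      have hinner : ⟪g k, z - x k⟫ = ‖g k‖ := by
        have hzz : z - x k = u := by rw [hz]; abel
        rw [hzz, hu, real_inner_smul_right, real_inner_self_eq_norm_sq]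
        field_simp
      have h1 : f (x k) + ‖g k‖ ≤ f z := by rw [← hinner]; exact hsubz
      have h2 : f z ≤ f w := hwmax hzT
      have h3 : f ys ≤ f (x k) := hysmin hxk
      have : ‖g k‖ ≤ f w - f ys := by linarith
      exact this.trans (le_max_left _ _)
  -- the fundamental inequality
  have key : ∀ k, K ≤ k → ∀ y ∈ Ω,
      ‖x (k+1) - y‖^2 ≤ ‖x k - y‖^2 - 2*(α k * ζ k)*(f (x k) - f y)
        + (α k * ζ k)^2 * ‖g k‖^2 := by
    intro k hk y hy
    have hk1 : 1 ≤ k := hK1.trans hk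
    have hcnn : 0 ≤ α k * ζ k := (hcpos k hk1).le
    have hp := hproj k hk1 y hy
    have hsq : ‖x (k+1) - y‖^2 ≤ ‖(x k - (α k * ζ k) • g k) - y‖^2 :=
      pow_le_pow_left₀ (norm_nonneg _) hp 2
    have hrw : x k - (α k * ζ k) • g k - y = (x k - y) - (α k * ζ k) • g k := by
      abel
    have e1 : ‖(x k - (α k * ζ k) • g k) - y‖^2
        = ‖x k - y‖^2 - 2*((α k * ζ k)*⟪x k - y, g k⟫) + (α k * ζ k)^2*‖g k‖^2 := by
      rw [hrw, norm_sub_sq_real, real_inner_smul_right, norm_smul, Real.norm_eq_abs,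
        mul_pow, sq_abs]
    have hsubz := hsub k hk1 y
    rw [hfk_eq k hk] at hsubz
    have e2 : f (x k) - f y ≤ ⟪x k - y, g k⟫ := by
      have hneg : y - x k = -(x k - y) := by abel
      rw [hneg, inner_neg_right] at hsubz
      rw [real_inner_comm]
      linarith
    have e3 : (α k * ζ k) * (f (x k) - f y) ≤ (α k * ζ k) * ⟪x k - y, g k⟫ :=
      mul_le_mul_of_nonneg_left e2 hcnn
    rw [e1] at hsq
    linarith
  -- error term
  set A : ℝ := (C2 * ζhi * G)^2 with hA
  set e : ℕ → ℝ := fun k => A * (1 / (k:ℝ)^2) with he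
  have heA : 0 ≤ A := sq_nonneg _
  have henn : ∀ k, 0 ≤ e k := by
    intro k
    apply mul_nonneg heA
    positivity
  have hesumm : Summable e :=
    (Real.summable_one_div_nat_pow.2 (by norm_num)).mul_left A
  have heshift : ∀ m : ℕ, Summable (fun i => e (i + m)) :=
    fun m => (summable_nat_add_iff m).2 hesumm
  -- bound on the quadratic term
  have hquad : ∀ k, K ≤ k → (α k * ζ k)^2 * ‖g k‖^2 ≤ e k := by
    intro k hk
    have hk1 : 1 ≤ k := hK1.trans hk
    have hk0 : (0:ℝ) < k := hkpos k hk1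
    have hcub : α k * ζ k ≤ C2 * ζhi / k := by
      have h1 := (hα k hk1).2
      have h2 := (hζ k hk1).2
      have h3 : α k * ζ k ≤ (C2 / k) * ζhi := by
        have hC2 : (0:ℝ) < C2 := lt_of_lt_of_le hC1 hC12
        apply mul_le_mul h1 h2 (hζpos k hk1).le
        positivity
      calc α k * ζ k ≤ (C2 / k) * ζhi := h3
        _ = C2 * ζhi / k := by ring
    have hcnn : 0 ≤ α k * ζ k := (hcpos k hk1).le
    have hgb := hGb k hk
    have h4 : (α k * ζ k)^2 ≤ (C2 * ζhi / k)^2 := pow_le_pow_left₀ hcnn hcub 2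
    have h5 : ‖g k‖^2 ≤ G^2 := pow_le_pow_left₀ (norm_nonneg _) hgb 2
    have h6 : (α k * ζ k)^2 * ‖g k‖^2 ≤ (C2 * ζhi / k)^2 * G^2 := by
      apply mul_le_mul h4 h5 (by positivity) (by positivity)
    calc (α k * ζ k)^2 * ‖g k‖^2 ≤ (C2 * ζhi / k)^2 * G^2 := h6
      _ = e k := by
        rw [he, hA]
        field_simp
  -- specialized step inequality at a minimizer
  have step : ∀ p ∈ Ω, f p = f ys → ∀ k, K ≤ k →
      ‖x (k+1) - p‖^2 ≤ ‖x k - p‖^2 - 2*(α k * ζ k)*(f (x k) - f ys) + e k := by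
    intro p hp hfp k hk
    have h1 := key k hk p hp
    rw [hfp] at h1
    have h2 := hquad k hk
    linarith
  -- telescoping sum
  have tele : ∀ m : ℕ,
      (∑ i ∈ Finset.range m, 2*(α (K+i) * ζ (K+i))*(f (x (K+i)) - f ys))
        + ‖x (K+m) - ys‖^2
      ≤ ‖x K - ys‖^2 + ∑ i ∈ Finset.range m, e (K+i) := by
    intro m
    induction m with
    | zero => simp
    | succ m ih =>
      rw [Finset.sum_range_succ, Finset.sum_range_succ]
      have hs := step ys hysΩ rfl (K+m) (Nat.le_add_right _ _)
      have hre : K + (m+1) = (K+m) + 1 := by ring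
      rw [hre]
      linarith
  -- nonnegativity of the terms
  have htnn : ∀ i : ℕ, 0 ≤ 2*(α (K+i) * ζ (K+i))*(f (x (K+i)) - f ys) := by
    intro i
    have hk1 : 1 ≤ K + i := le_trans hK1 (Nat.le_add_right _ _)
    have h1 : 0 ≤ α (K+i) * ζ (K+i) := (hcpos _ hk1).le
    have h2 : 0 ≤ f (x (K+i)) - f ys := sub_nonneg.mpr (hysmin (hxΩ _ hk1))
    positivity
  -- the series of 2*c_k*(f x_k - f*) is summable
  have htsumm : Summable (fun i => 2*(α (K+i) * ζ (K+i))*(f (x (K+i)) - f ys)) := by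
    apply summable_of_sum_range_le htnn (c := ‖x K - ys‖^2 + ∑' i, e (i+K))
    intro m
    have h1 := tele m
    have h2 : ∑ i ∈ Finset.range m, e (K+i) ≤ ∑' i, e (i+K) := by
      have h3 : ∑ i ∈ Finset.range m, e (K+i) = ∑ i ∈ Finset.range m, e (i+K) :=
        Finset.sum_congr rfl (fun i _ => by rw [Nat.add_comm])
      rw [h3]
      exact Summable.sum_le_tsum _ (fun i _ => henn _) (heshift K)
    nlinarith [sq_nonneg ‖x (K+m) - ys‖]
  -- frequently, f (x k) is close to the min
  have hfreq : ∀ ε : ℝ, 0 < ε → ∃ᶠ k in atTop, f (x k) < f ys + ε := by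
    intro ε hε
    by_contra hcon
    rw [Filter.not_frequently] at hcon
    rw [eventually_atTop] at hcon
    obtain ⟨N, hN⟩ := hcon
    have hlow : ∀ i : ℕ, ε * (2*C1*ζlo) * (1/((K + (N+i) : ℕ) : ℝ))
        ≤ 2*(α (K+(N+i)) * ζ (K+(N+i)))*(f (x (K+(N+i))) - f ys) := by
      intro i
      set k := K + (N+i) with hkdef
      have hk1 : 1 ≤ k := le_trans hK1 (Nat.le_add_right _ _)
      have hk0 : (0:ℝ) < k := hkpos k hk1
      have hge : N ≤ k := by omega
      have hflow : ¬ f (x k) < f ys + ε := hN k hge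
      push_neg at hflow
      have hclow : C1 * ζlo / k ≤ α k * ζ k := by
        have h1 := (hα k hk1).1
        have h2 := (hζ k hk1).1
        have h3 : (C1 / k) * ζlo ≤ α k * ζ k :=
          mul_le_mul h1 h2 hζlo.le (hαpos k hk1).le
        calc C1 * ζlo / k = (C1 / k) * ζlo := by ring
          _ ≤ α k * ζ k := h3
      have hεle : ε ≤ f (x k) - f ys := by linarith
      have h3 : 2 * (C1 * ζlo / k) * ε ≤ 2*(α k * ζ k)*(f (x k) - f ys) := by
        apply mul_le_mul (by linarith) hεle hε.le
        have := (hcpos k hk1).le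
        positivity
      calc ε * (2*C1*ζlo) * (1/(k:ℝ)) = 2 * (C1 * ζlo / k) * ε := by
            field_simp
        _ ≤ 2*(α k * ζ k)*(f (x k) - f ys) := h3
    have hsum2 : Summable
        (fun i => 2*(α (K+(N+i)) * ζ (K+(N+i)))*(f (x (K+(N+i))) - f ys)) := by
      have h4 := (summable_nat_add_iff
        (f := fun i => 2*(α (K+i) * ζ (K+i))*(f (x (K+i)) - f ys)) N).2 htsumm
      exact h4.congr (fun i => by rw [Nat.add_comm i N])
    have hsum3 : Summable (fun i => ε * (2*C1*ζlo) * (1/((K + (N+i) : ℕ) : ℝ))) := by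
      apply Summable.of_nonneg_of_le _ hlow hsum2
      intro i
      positivity
    have hc : (ε * (2*C1*ζlo)) ≠ 0 := by positivity
    have hsum4 : Summable (fun i : ℕ => (1/((K + (N+i) : ℕ) : ℝ))) := by
      have h5 := hsum3.mul_left (ε * (2*C1*ζlo))⁻¹
      apply h5.congr
      intro i
      rw [← mul_assoc, inv_mul_cancel₀ hc, one_mul]
    have hsum5 : Summable (fun k : ℕ => (1/(k:ℝ))) := by
      have h6 : Summable (fun i : ℕ => (1/((i + (K + N) : ℕ) : ℝ))) := by
        apply hsum4.congr
        intro i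
        rw [show K + (N+i) = i + (K+N) by omega]
      exact (summable_nat_add_iff (K+N)).1 h6
    exact Real.not_summable_one_div_natCast hsum5
  -- select a subsequence with f (x k) → f ys
  have hsel : ∀ j : ℕ, ∃ k, (max K (j+1)) ≤ k ∧ f (x k) < f ys + 1/((j:ℝ)+1) := by
    intro j
    have hpos : (0:ℝ) < 1/((j:ℝ)+1) := by positivity
    have hfe := (hfreq (1/((j:ℝ)+1)) hpos).and_eventually
      (eventually_ge_atTop (max K (j+1)))
    obtain ⟨k, hk1, hk2⟩ := hfe.exists
    exact ⟨k, hk2, hk1⟩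
  choose kk hkk1 hkk2 using hsel
  have hkkK : ∀ j, K ≤ kk j := fun j => le_trans (le_max_left _ _) (hkk1 j)
  have hkkj : ∀ j, j + 1 ≤ kk j := fun j => le_trans (le_max_right _ _) (hkk1 j)
  have hkk_one : ∀ j, 1 ≤ kk j := fun j => le_trans hK1 (hkkK j)
  obtain ⟨xbar, hxbarΩ, φ, hφ, hφt⟩ :=
    hΩcomp.tendsto_subseq (x := fun j => x (kk j)) (fun j => hxΩ _ (hkk_one j))
  have hφt' : Tendsto (fun j => x (kk (φ j))) atTop (nhds xbar) := hφt
  -- f xbar = f ys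
  have hfxbar : f xbar = f ys := by
    apply le_antisymm
    · have ht1 : Tendsto (fun j => f (x (kk (φ j)))) atTop (nhds (f xbar)) :=
        (hfc.tendsto xbar).comp hφt'
      have ht2 : Tendsto (fun j => f ys + 1/((φ j : ℝ)+1)) atTop (nhds (f ys + 0)) := by
        apply Tendsto.const_add
        exact tendsto_one_div_add_atTop_nhds_zero_nat.comp hφ.tendsto_atTop
      rw [add_zero] at ht2
      apply le_of_tendsto_of_tendsto ht1 ht2
      filter_upwards with j
      exact (hkk2 (φ j)).le
    · exact hysmin hxbarΩ
  -- monotone-type estimate towards xbar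
  have step2 : ∀ k, K ≤ k → ‖x (k+1) - xbar‖^2 ≤ ‖x k - xbar‖^2 + e k := by
    intro k hk
    have h1 := key k hk xbar hxbarΩ
    have h2 := hquad k hk
    have hk1 : 1 ≤ k := hK1.trans hk
    have h3 : 0 ≤ 2*(α k * ζ k)*(f (x k) - f xbar) := by
      have hc1 : 0 ≤ α k * ζ k := (hcpos k hk1).le
      have hc2 : 0 ≤ f (x k) - f xbar := by
        rw [hfxbar]
        exact sub_nonneg.mpr (hysmin (hxΩ k hk1))
      positivity
    linarith
  have tele2 : ∀ m, K ≤ m → ∀ i : ℕ,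
      ‖x (m+i) - xbar‖^2 ≤ ‖x m - xbar‖^2 + ∑ j ∈ Finset.range i, e (m+j) := by
    intro m hm i
    induction i with
    | zero => simp
    | succ i ih =>
      rw [Finset.sum_range_succ]
      have hs := step2 (m+i) (le_trans hm (Nat.le_add_right _ _))
      have hre : m + (i+1) = (m+i) + 1 := by ring
      rw [hre]
      linarith
  -- now prove convergence
  refine ⟨xbar, hxbarΩ, by rw [hfxbar, hsInf], ?_⟩
  rw [Metric.tendsto_atTop]
  intro ε hε
  have htail : Tendsto (fun m => ∑' j, e (j + m)) atTop (nhds 0) :=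
    tendsto_sum_nat_add e
  have hev1 : ∀ᶠ m in atTop, ∑' j, e (j + m) < ε^2/2 :=
    htail.eventually_lt_const (by positivity)
  have hfr : ∃ᶠ m in atTop, ‖x m - xbar‖^2 < ε^2/2 := by
    have h1 : Tendsto (fun j => kk (φ j)) atTop atTop := by
      apply tendsto_atTop_mono (f := fun j : ℕ => j) _ tendsto_id
      intro j
      show j ≤ kk (φ j)
      have ha : j ≤ φ j := hφ.le_apply
      have hb := hkkj (φ j)
      omega
    have h2 : Tendsto (fun j => ‖x (kk (φ j)) - xbar‖^2) atTop (nhds 0) := by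
      have h3 : Tendsto (fun j => x (kk (φ j)) - xbar) atTop (nhds (xbar - xbar)) :=
        hφt'.sub tendsto_const_nhds
      rw [sub_self] at h3
      have h4 := h3.norm
      rw [norm_zero] at h4
      have h5 := h4.pow 2
      simpa using h5
    exact h1.frequently ((h2.eventually_lt_const (by positivity)).frequently)
  obtain ⟨m, hm1, hm2, hmK⟩ :=
    (hfr.and_eventually (hev1.and (eventually_ge_atTop K))).exists
  refine ⟨m, ?_⟩
  intro k hk
  have hik : m + (k - m) = k := by omega
  have h1 := tele2 m hmK (k - m)
  rw [hik] at h1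
  have h2 : ∑ j ∈ Finset.range (k-m), e (m+j) ≤ ∑' j, e (j + m) := by
    have h3 : ∑ j ∈ Finset.range (k-m), e (m+j) = ∑ j ∈ Finset.range (k-m), e (j+m) :=
      Finset.sum_congr rfl (fun i _ => by rw [Nat.add_comm])
    rw [h3]
    exact Summable.sum_le_tsum _ (fun i _ => henn _) (heshift m)
  rw [dist_eq_norm]
  nlinarith [norm_nonneg (x k - xbar)]
end

section
/- Under the SPS iteration on a nonempty closed convex set Ω ⊆ E, suppose f : E → ℝ is convex and continuous, x* ∈ Ω satisfies f(x*) ≤ f(y) for all y ∈ Ω, there is a bounded set B ⊆ E with x* ∈ B and x_k ∈ B for all k ≥ 1, there is G > 0 with ‖g_k‖ ≤ G for all k ≥ 1, and the errors e_k := sup_{x ∈ B} |f_k(x) − f(x)| satisfy e_k → 0 as k → ∞. Then liminf_{k→∞} f(x_k) = f(x*). -/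
open scoped RealInnerProductSpace
open Filter

set_option maxHeartbeats 1000000 in
/-- Theorem 3, part 1 (pathwise): SPS iteration on a nonempty closed convex set with
iterates staying in a bounded set `B` containing a minimizer `x*`; if the SAA error
over `B` tends to zero, then `liminf f(x_k) = f(x*)`. -/
theorem sps_liminf_optimal_unbounded {n : ℕ}
    (Ω : Set (EuclideanSpace ℝ (Fin n)))
    (hΩne : Ω.Nonempty) (hΩclosed : IsClosed Ω) (hΩconv : Convex ℝ Ω)
    (C1 C2 ζlo ζhi : ℝ)
    (hC1 : 0 < C1) (hC12 : C1 ≤ C2) (hζlo : 0 < ζlo) (hζlohi : ζlo ≤ ζhi)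
    (x : ℕ → EuclideanSpace ℝ (Fin n)) (hxΩ : ∀ k, 1 ≤ k → x k ∈ Ω)
    (fk : ℕ → EuclideanSpace ℝ (Fin n) → ℝ)
    (hfkconv : ∀ k, ConvexOn ℝ Set.univ (fk k))
    (g : ℕ → EuclideanSpace ℝ (Fin n))
    (hsub : ∀ k, 1 ≤ k → ∀ z, fk k (x k) + ⟪g k, z - x k⟫ ≤ fk k z)
    (ζ α : ℕ → ℝ)
    (hζ : ∀ k, 1 ≤ k → ζ k ∈ Set.Icc ζlo ζhi)
    (hα : ∀ k : ℕ, 1 ≤ k → α k ∈ Set.Icc (C1 / (k : ℝ)) (C2 / (k : ℝ)))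
    (hproj : ∀ k, 1 ≤ k → ∀ y ∈ Ω,
      ‖x (k + 1) - y‖ ≤ ‖(x k - (α k * ζ k) • g k) - y‖)
    (f : EuclideanSpace ℝ (Fin n) → ℝ)
    (hfconv : ConvexOn ℝ Set.univ f) (hfcont : Continuous f)
    (xstar : EuclideanSpace ℝ (Fin n)) (hxstarΩ : xstar ∈ Ω)
    (hmin : ∀ y ∈ Ω, f xstar ≤ f y)
    (B : Set (EuclideanSpace ℝ (Fin n))) (hB : Bornology.IsBounded B)
    (hxstarB : xstar ∈ B) (hxB : ∀ k, 1 ≤ k → x k ∈ B)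
    (G : ℝ) (hG : 0 < G) (hgbd : ∀ k, 1 ≤ k → ‖g k‖ ≤ G)
    (e : ℕ → ℝ)
    (he : ∀ k, e k = sSup ((fun z => |fk k z - f z|) '' B))
    (helim : Tendsto e atTop (nhds 0)) :
    liminf (fun k => f (x k)) atTop = f xstar := by
  classical
  -- closure of B is compact
  have hBclcomp : IsCompact (closure B) := hB.isCompact_closure
  -- bound for f on B
  obtain ⟨M, hM⟩ : ∃ M, ∀ z ∈ closure B, |f z| ≤ M := by
    obtain ⟨M, hM⟩ := (hBclcomp.image hfcont.abs).bddAbove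
    exact ⟨M, fun z hz => hM ⟨z, hz, rfl⟩⟩
  have hBsubcl : B ⊆ closure B := subset_closure
  -- boundedness of the sequence f (x k)
  have hub : IsBoundedUnder (· ≤ ·) atTop (fun k => f (x k)) :=
    ⟨M, eventually_map.2 (eventually_atTop.2 ⟨1, fun k hk =>
      (abs_le.1 (hM _ (hBsubcl (hxB k hk)))).2⟩)⟩
  have hlb : IsBoundedUnder (· ≥ ·) atTop (fun k => f (x k)) :=
    ⟨-M, eventually_map.2 (eventually_atTop.2 ⟨1, fun k hk =>
      (abs_le.1 (hM _ (hBsubcl (hxB k hk)))).1⟩)⟩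
  -- liminf ≥ f xstar
  have hge : f xstar ≤ liminf (fun k => f (x k)) atTop := by
    apply le_liminf_of_le hub.isCoboundedUnder_ge
    exact eventually_atTop.2 ⟨1, fun k hk => hmin _ (hxΩ k hk)⟩
  -- e k bounds the error at points of B
  have heb : ∀ k, ∀ z ∈ B, |fk k z - f z| ≤ e k := by
    intro k z hz
    have hfkcont : Continuous (fk k) :=
      continuousOn_univ.1 ((hfkconv k).continuousOn isOpen_univ)
    have hbdd : BddAbove ((fun z => |fk k z - f z|) '' B) := by
      obtain ⟨M', hM'⟩ :=
        (hBclcomp.image (hfkcont.sub hfcont).abs).bddAbove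
      exact ⟨M', fun y ⟨w, hw, hwy⟩ => hwy ▸ hM' ⟨w, hBsubcl hw, rfl⟩⟩
    rw [he k]
    exact le_csSup hbdd ⟨z, hz, rfl⟩
  set d : ℕ → ℝ := fun k => ‖x k - xstar‖ ^ 2 with hd
  -- key descent inequality
  have key : ∀ k, 1 ≤ k →
      d (k + 1) ≤ d k - 2 * (α k * ζ k) * (f (x k) - f xstar - 2 * e k)
        + (α k * ζ k) ^ 2 * G ^ 2 := by
    intro k hk
    set a := α k * ζ k with ha
    have ha0 : 0 ≤ a := by
      have h1 := (hα k hk).1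
      have h2 := (hζ k hk).1
      have hk0 : (0:ℝ) < (k:ℝ) := by exact_mod_cast hk
      have : 0 < C1 / (k:ℝ) := div_pos hC1 hk0
      nlinarith
    have h1 : ‖x (k + 1) - xstar‖ ≤ ‖(x k - a • g k) - xstar‖ :=
      hproj k hk xstar hxstarΩ
    have h2 : d (k + 1) ≤ ‖(x k - a • g k) - xstar‖ ^ 2 :=
      pow_le_pow_left₀ (norm_nonneg _) h1 2
    have hre : (x k - a • g k) - xstar = (x k - xstar) - a • g k := by abel
    have hexp : ‖(x k - a • g k) - xstar‖ ^ 2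
        = d k - 2 * a * ⟪g k, x k - xstar⟫ + a ^ 2 * ‖g k‖ ^ 2 := by
      rw [hre, norm_sub_sq_real, real_inner_smul_right, real_inner_comm,
        norm_smul, mul_pow, Real.norm_eq_abs, sq_abs]
      simp only [hd]
      ring
    -- subgradient inequality
    have hs := hsub k hk xstar
    have hinner : fk k (x k) - fk k xstar ≤ ⟪g k, x k - xstar⟫ := by
      have : ⟪g k, xstar - x k⟫ = -⟪g k, x k - xstar⟫ := by
        rw [show xstar - x k = -(x k - xstar) by abel, inner_neg_right]
      linarith [hs, this.le, this.ge]
    have he1 := abs_le.1 (heb k _ (hxB k hk))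
    have he2 := abs_le.1 (heb k xstar hxstarB)
    have hip : f (x k) - f xstar - 2 * e k ≤ ⟪g k, x k - xstar⟫ := by
      linarith
    have hgk : ‖g k‖ ^ 2 ≤ G ^ 2 := by
      have := hgbd k hk
      nlinarith [norm_nonneg (g k)]
    nlinarith [mul_le_mul_of_nonneg_left hip (by linarith : (0:ℝ) ≤ 2 * a),
      mul_le_mul_of_nonneg_left hgk (sq_nonneg a)]
  -- Now prove equality by contradiction
  rcases lt_or_ge (f xstar) (liminf (fun k => f (x k)) atTop) with hlt | hle
  · exfalso
    obtain ⟨ε, hε0, hev1, hev2⟩ :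
        ∃ ε : ℝ, 0 < ε ∧ (∀ᶠ k in atTop, f xstar + ε < f (x k))
          ∧ (∀ᶠ k in atTop, e k < ε / 4) := by
      refine ⟨(liminf (fun k => f (x k)) atTop - f xstar) / 2, by linarith, ?_, ?_⟩
      · exact eventually_lt_of_lt_liminf (by linarith) hlb
      · exact helim.eventually (gt_mem_nhds (by linarith))
    obtain ⟨N, hN⟩ := ((hev1.and hev2).and (eventually_ge_atTop 1)).exists_forall_of_atTop
    set N' := N + 1 with hN'
    obtain ⟨c, hc, hcdef⟩ : ∃ c : ℝ, 0 < c ∧ c = C1 * ζlo * ε :=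
      ⟨_, by positivity, rfl⟩
    obtain ⟨D, hD, hDdef⟩ : ∃ D : ℝ, 0 ≤ D ∧ D = (C2 * ζhi * G) ^ 2 :=
      ⟨_, sq_nonneg _, rfl⟩
    have step : ∀ k, N' ≤ k →
        d (k + 1) ≤ d k - c * (1 / (k : ℝ)) + D * (1 / (k : ℝ) ^ 2) := by
      intro k hk'
      obtain ⟨⟨hf1, he1⟩, hk1⟩ := hN k (le_trans (Nat.le_succ N) hk')
      have hkR : (0:ℝ) < (k : ℝ) := by exact_mod_cast hk1
      obtain ⟨hαlo, hαhi⟩ := hα k hk1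
      obtain ⟨hζl, hζh⟩ := hζ k hk1
      have hαpos : 0 < α k := lt_of_lt_of_le (div_pos hC1 hkR) hαlo
      have haz : 0 ≤ α k * ζ k := mul_nonneg hαpos.le (hζlo.le.trans hζl)
      have ha_lo : C1 * ζlo / (k:ℝ) ≤ α k * ζ k := by
        rw [div_le_iff₀ hkR] at hαlo ⊢
        nlinarith
      have ha_hi : α k * ζ k ≤ C2 * ζhi / (k:ℝ) := by
        rw [le_div_iff₀ hkR] at hαhi ⊢
        nlinarith
      have hs2 : ε / 2 ≤ f (x k) - f xstar - 2 * e k := by linarith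
      have hkey := key k hk1
      have hmul1 : (C1 * ζlo / (k:ℝ)) * (ε / 2) ≤ (α k * ζ k) * (f (x k) - f xstar - 2 * e k) :=
        mul_le_mul ha_lo hs2 (by positivity) haz
      have hmul2 : (α k * ζ k) ^ 2 ≤ (C2 * ζhi / (k:ℝ)) ^ 2 :=
        pow_le_pow_left₀ haz ha_hi 2
      have hmul2' : (α k * ζ k) ^ 2 * G ^ 2 ≤ (C2 * ζhi / (k:ℝ)) ^ 2 * G ^ 2 :=
        mul_le_mul_of_nonneg_right hmul2 (sq_nonneg G)
      have e1 : 2 * ((C1 * ζlo / (k:ℝ)) * (ε / 2)) = c * (1 / (k:ℝ)) := by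
        rw [hcdef]; ring
      have e2 : (C2 * ζhi / (k:ℝ)) ^ 2 * G ^ 2 = D * (1 / (k:ℝ) ^ 2) := by
        rw [hDdef]; ring
      linarith
    have main : ∀ m, d (N' + m) ≤ d N'
        - c * (∑ j ∈ Finset.Ico N' (N' + m), (1 / (j : ℝ)))
        + D * (∑ j ∈ Finset.Ico N' (N' + m), 1 / (j : ℝ) ^ 2) := by
      intro m
      induction m with
      | zero => simp
      | succ m ih =>
        have hle : N' ≤ N' + m := Nat.le_add_right _ _
        have hrw : N' + (m + 1) = (N' + m) + 1 := by ring
        rw [hrw, Finset.sum_Ico_succ_top hle, Finset.sum_Ico_succ_top hle]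
        have h1 := step (N' + m) hle
        linarith
    have hsum2 : Summable (fun j : ℕ => 1 / (j : ℝ) ^ 2) :=
      Real.summable_one_div_nat_pow.mpr one_lt_two
    set T := ∑' j : ℕ, 1 / (j : ℝ) ^ 2 with hT
    have hd0 : ∀ k, 0 ≤ d k := fun k => sq_nonneg _
    have bound : ∀ m, c * (∑ j ∈ Finset.Ico N' (N' + m), (1 / (j : ℝ)))
        ≤ d N' + D * T := by
      intro m
      have hpart : ∑ j ∈ Finset.Ico N' (N' + m), 1 / (j : ℝ) ^ 2 ≤ T :=
        Summable.sum_le_tsum _ (fun i _ => by positivity) hsum2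
      have := main m
      nlinarith [hd0 (N' + m)]
    have hdiv : Tendsto (fun M => ∑ j ∈ Finset.range M, (1 / (j : ℝ))) atTop atTop :=
      (not_summable_iff_tendsto_nat_atTop_of_nonneg (fun i => by positivity)).1
        Real.not_summable_one_div_natCast
    set K := d N' + D * T with hK
    obtain ⟨M, hMgt, hMN⟩ :=
      ((hdiv.eventually_gt_atTop ((∑ j ∈ Finset.range N', (1 / (j : ℝ))) + K / c)).and
        (eventually_ge_atTop N')).exists
    have hMeq : N' + (M - N') = M := Nat.add_sub_cancel' hMN
    have hIco : ∑ j ∈ Finset.Ico N' M, (1 / (j : ℝ))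
        = ∑ j ∈ Finset.range M, (1 / (j : ℝ)) - ∑ j ∈ Finset.range N', (1 / (j : ℝ)) :=
      Finset.sum_Ico_eq_sub _ hMN
    have hb := bound (M - N')
    rw [hMeq, hIco] at hb
    have hKc : c * (K / c) = K := by field_simp
    nlinarith
  · exact le_antisymm hle hge
end

section
/- Under the SPS iteration on a nonempty closed convex set Ω ⊆ E, suppose f : E → ℝ is convex and continuous, x* ∈ Ω satisfies f(x*) ≤ f(y) for all y ∈ Ω, there is a bounded set B ⊆ E with x* ∈ B and x_k ∈ B for all k ≥ 1, there is G > 0 with ‖g_k‖ ≤ G for all k ≥ 1, and the errors e_k := sup_{x ∈ B} |f_k(x) − f(x)| satisfy Σ_{k≥1} e_k/k < ∞. Then there exists x̂ ∈ Ω with f(x̂) = f(x*) such that x_k → x̂ as k → ∞. -/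
set_option maxHeartbeats 1000000


open scoped RealInnerProductSpace
open Filter

lemma quasi_fejer {a b : ℕ → ℝ} (ha : ∀ k, 0 ≤ a k) (hb : ∀ k, 0 ≤ b k)
    (hbs : Summable b) (hrec : ∀ k, a (k+1) ≤ a k + b k) :
    ∃ L, Tendsto a atTop (nhds L) := by
  set T : ℕ → ℝ := fun k => ∑' j, b (j + k) with hT
  have hTsum : ∀ k, Summable (fun j => b (j + k)) := fun k => (summable_nat_add_iff k).2 hbs
  have hTrec : ∀ k, T k = b k + T (k+1) := by
    intro k
    have := Summable.tsum_eq_zero_add (hTsum k)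
    simp only [zero_add] at this
    rw [hT]
    simp only
    rw [this]
    congr 1
    apply tsum_congr
    intro j
    congr 1
    omega
  have anti : Antitone (fun k => a k + T k) := by
    apply antitone_nat_of_succ_le
    intro k
    have := hrec k
    have h2 := hTrec k
    linarith
  have bdd : BddBelow (Set.range (fun k => a k + T k)) := by
    refine ⟨0, ?_⟩
    rintro z ⟨k, rfl⟩
    have : 0 ≤ T k := tsum_nonneg (fun j => hb _)
    have := ha k
    positivity
  have h1 := tendsto_atTop_ciInf anti bdd
  have h2 : Tendsto T atTop (nhds 0) := by
    have := tendsto_sum_nat_add b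
    exact this
  refine ⟨(⨅ k, a k + T k) - 0, ?_⟩
  have := h1.sub h2
  simpa using this

lemma summable_of_telescope {a b c : ℕ → ℝ} (ha : ∀ k, 0 ≤ a k) (hb : ∀ k, 0 ≤ b k)
    (hc : ∀ k, 0 ≤ c k) (hbs : Summable b)
    (hrec : ∀ k, a (k+1) + c k ≤ a k + b k) : Summable c := by
  apply summable_of_sum_range_le (c := a 0 + ∑' k, b k) hc
  intro N
  have key : ∀ N, a N + ∑ i ∈ Finset.range N, c i ≤ a 0 + ∑ i ∈ Finset.range N, b i := by
    intro N
    induction N with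
    | zero => simp
    | succ N ih =>
      rw [Finset.sum_range_succ, Finset.sum_range_succ]
      have := hrec N
      linarith
  have h1 := key N
  have h2 : ∑ i ∈ Finset.range N, b i ≤ ∑' k, b k :=
    Summable.sum_le_tsum _ (fun i _ => hb i) hbs
  have := ha N
  linarith

/-- Theorem 3, part 2 (pathwise): SPS iteration on a nonempty closed convex set with
iterates staying in a bounded set `B` containing a minimizer `x*`; if the SAA errors
over `B` satisfy `Σ e_k/k < ∞`, then the iterates converge to some minimizer. -/
theorem sps_convergence_unbounded {n : ℕ}
    (Ω : Set (EuclideanSpace ℝ (Fin n)))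
    (hΩne : Ω.Nonempty) (hΩclosed : IsClosed Ω) (hΩconv : Convex ℝ Ω)
    (C1 C2 ζlo ζhi : ℝ)
    (hC1 : 0 < C1) (hC12 : C1 ≤ C2) (hζlo : 0 < ζlo) (hζlohi : ζlo ≤ ζhi)
    (x : ℕ → EuclideanSpace ℝ (Fin n)) (hxΩ : ∀ k, 1 ≤ k → x k ∈ Ω)
    (fk : ℕ → EuclideanSpace ℝ (Fin n) → ℝ)
    (hfkconv : ∀ k, ConvexOn ℝ Set.univ (fk k))
    (g : ℕ → EuclideanSpace ℝ (Fin n))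
    (hsub : ∀ k, 1 ≤ k → ∀ z, fk k (x k) + ⟪g k, z - x k⟫ ≤ fk k z)
    (ζ α : ℕ → ℝ)
    (hζ : ∀ k, 1 ≤ k → ζ k ∈ Set.Icc ζlo ζhi)
    (hα : ∀ k : ℕ, 1 ≤ k → α k ∈ Set.Icc (C1 / (k : ℝ)) (C2 / (k : ℝ)))
    (hproj : ∀ k, 1 ≤ k → ∀ y ∈ Ω,
      ‖x (k + 1) - y‖ ≤ ‖(x k - (α k * ζ k) • g k) - y‖)
    (f : EuclideanSpace ℝ (Fin n) → ℝ)
    (hfconv : ConvexOn ℝ Set.univ f) (hfcont : Continuous f)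
    (xstar : EuclideanSpace ℝ (Fin n)) (hxstarΩ : xstar ∈ Ω)
    (hmin : ∀ y ∈ Ω, f xstar ≤ f y)
    (B : Set (EuclideanSpace ℝ (Fin n))) (hB : Bornology.IsBounded B)
    (hxstarB : xstar ∈ B) (hxB : ∀ k, 1 ≤ k → x k ∈ B)
    (G : ℝ) (hG : 0 < G) (hgbd : ∀ k, 1 ≤ k → ‖g k‖ ≤ G)
    (e : ℕ → ℝ)
    (he : ∀ k, e k = sSup ((fun z => |fk k z - f z|) '' B))
    (hesum : Summable (fun k : ℕ => e k / k)) :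
    ∃ xhat ∈ Ω, f xhat = f xstar ∧ Tendsto x atTop (nhds xhat) := by
  -- basic continuity facts
  have hC2 : 0 < C2 := hC1.trans_le hC12
  have hζhi : 0 < ζhi := hζlo.trans_le hζlohi
  have hfkcont : ∀ k, Continuous (fk k) := fun k =>
    continuousOn_univ.mp ((hfkconv k).continuousOn isOpen_univ)
  have hK : IsCompact (closure B) :=
    Metric.isCompact_of_isClosed_isBounded isClosed_closure hB.closure
  -- error bound on B
  have heb : ∀ k, ∀ z ∈ B, |fk k z - f z| ≤ e k := by
    intro k z hz
    rw [he]
    have hcont : ContinuousOn (fun z => |fk k z - f z|) (closure B) :=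
      (((hfkcont k).sub hfcont).abs).continuousOn
    have hbdd : BddAbove ((fun z => |fk k z - f z|) '' closure B) :=
      (hK.image_of_continuousOn hcont).bddAbove
    exact le_csSup (hbdd.mono (Set.image_mono subset_closure))
      (Set.mem_image_of_mem _ hz)
  have he0 : ∀ k, 0 ≤ e k := fun k => le_trans (abs_nonneg _) (heb k xstar hxstarB)
  -- bounds for the combined stepsize
  have hk0 : ∀ k : ℕ, 1 ≤ k → (0:ℝ) < k := fun k hk => by exact_mod_cast hk
  have hα0 : ∀ k, 1 ≤ k → 0 ≤ α k := fun k hk =>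
    le_trans (div_nonneg hC1.le (Nat.cast_nonneg k)) (hα k hk).1
  have hαζ0 : ∀ k, 1 ≤ k → 0 ≤ α k * ζ k := by
    intro k hk
    have h2 := (hζ k hk).1
    have := hα0 k hk
    nlinarith
  have hαζub : ∀ k, 1 ≤ k → α k * ζ k ≤ C2 * ζhi / k := by
    intro k hk
    have h1 := (hα k hk).2
    have h2 := (hζ k hk).2
    have h1' := (hα k hk).1
    have h2' := (hζ k hk).1
    have hkpos := hk0 k hk
    have : α k * ζ k ≤ (C2 / k) * ζhi :=
      mul_le_mul h1 h2 (le_trans hζlo.le h2') (div_nonneg hC2.le (Nat.cast_nonneg k))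
    calc α k * ζ k ≤ (C2 / k) * ζhi := this
    _ = C2 * ζhi / k := by ring
  have hαζlb : ∀ k, 1 ≤ k → C1 * ζlo / k ≤ α k * ζ k := by
    intro k hk
    have h1 := (hα k hk).1
    have h2 := (hζ k hk).1
    have hkpos := hk0 k hk
    have : (C1 / k) * ζlo ≤ α k * ζ k :=
      mul_le_mul h1 h2 hζlo.le (hα0 k hk)
    calc C1 * ζlo / k = (C1 / k) * ζlo := by ring
    _ ≤ α k * ζ k := this
  -- the key one-step inequality
  have key : ∀ k, 1 ≤ k → ∀ y ∈ Ω, (|fk k y - f y| ≤ e k) →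
      ‖x (k+1) - y‖^2 ≤ ‖x k - y‖^2
        + 2*(α k*ζ k)*((f y - f (x k)) + 2*(e k)) + (α k*ζ k)^2*G^2 := by
    intro k hk y hyΩ hy
    have h1 := hproj k hk y hyΩ
    have h2 : ‖x (k+1) - y‖^2 ≤ ‖(x k - (α k*ζ k)•g k) - y‖^2 :=
      pow_le_pow_left₀ (norm_nonneg _) h1 2
    have hrw : x k - (α k*ζ k)•g k - y = (x k - y) - (α k*ζ k)•g k := by
      rw [sub_right_comm]
    have expand : ‖(x k - (α k*ζ k)•g k) - y‖^2
        = ‖x k - y‖^2 - 2*((α k*ζ k)*⟪g k, x k - y⟫) + (α k*ζ k)^2*‖g k‖^2 := by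
      rw [hrw, norm_sub_sq_real, real_inner_smul_right, norm_smul, Real.norm_eq_abs,
        mul_pow, sq_abs, real_inner_comm]
    have hsubk : f (x k) - f y - 2*(e k) ≤ ⟪g k, x k - y⟫ := by
      have hs := hsub k hk y
      have hne : ⟪g k, y - x k⟫ = -⟪g k, x k - y⟫ := by
        rw [← inner_neg_right, neg_sub]
      rw [hne] at hs
      have hxkB := heb k (x k) (hxB k hk)
      have h1 := abs_le.mp hxkB
      have h2 := abs_le.mp hy
      linarith [h1.1, h1.2, h2.1, h2.2]
    have t1 : (α k*ζ k)*(f (x k) - f y - 2*(e k)) ≤ (α k*ζ k)*⟪g k, x k - y⟫ :=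
      mul_le_mul_of_nonneg_left hsubk (hαζ0 k hk)
    have t2 : (α k*ζ k)^2*‖g k‖^2 ≤ (α k*ζ k)^2*G^2 :=
      mul_le_mul_of_nonneg_left (pow_le_pow_left₀ (norm_nonneg _) (hgbd k hk) 2)
        (sq_nonneg _)
    rw [expand] at h2
    nlinarith [h2, t1, t2]
  -- the summable noise sequence
  set b : ℕ → ℝ := fun k => if k = 0 then 0 else
    2*(α k*ζ k)*(2*(e k)) + (α k*ζ k)^2*G^2 with hbdef
  have hbnn : ∀ k, 0 ≤ b k := by
    intro k
    rcases Nat.eq_zero_or_pos k with h | h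
    · simp [hbdef, h]
    · simp only [hbdef, if_neg (by omega : ¬ k = 0)]
      have h1 := hαζ0 k h
      have h2 := he0 k
      nlinarith [mul_nonneg (sq_nonneg (α k * ζ k)) (sq_nonneg G), mul_nonneg h1 h2]
  have hbs : Summable b := by
    set D := C2 * ζhi with hD
    have hD0 : 0 < D := by positivity
    apply Summable.of_nonneg_of_le hbnn
      (f := fun k => 4*D*(e k / k) + D^2*G^2*(1/(k:ℝ)^2))
    · intro k
      rcases Nat.eq_zero_or_pos k with h | h
      · subst h
        simp [hbdef]
      · simp only [hbdef, if_neg (by omega : ¬ k = 0)]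
        have hub := hαζub k h
        have hlb := hαζ0 k h
        have hkpos := hk0 k h
        have he0k := he0 k
        have h1 : 2*(α k*ζ k)*(2*(e k)) ≤ 4*D*(e k / k) := by
          have := mul_le_mul_of_nonneg_right hub he0k
          rw [div_mul_eq_mul_div] at this
          calc 2*(α k*ζ k)*(2*(e k)) = 4*((α k*ζ k)*(e k)) := by ring
          _ ≤ 4*(D * e k / k) := by linarith
          _ = 4*D*(e k / k) := by ring
        have h2 : (α k*ζ k)^2*G^2 ≤ D^2*G^2*(1/(k:ℝ)^2) := by
          have hsq : (α k*ζ k)^2 ≤ (D/k)^2 := by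
            apply pow_le_pow_left₀ hlb hub
          calc (α k*ζ k)^2*G^2 ≤ (D/k)^2*G^2 := by nlinarith
          _ = D^2*G^2*(1/(k:ℝ)^2) := by rw [div_pow]; ring
        linarith
    · apply Summable.add
      · exact hesum.mul_left _
      · exact (Real.summable_one_div_nat_pow.mpr one_lt_two).mul_left _
  -- quasi-Fejér for any good target point
  have stepA : ∀ y ∈ Ω, (∀ k, 1 ≤ k → |fk k y - f y| ≤ e k) → f y = f xstar →
      ∃ L, Tendsto (fun k => ‖x k - y‖^2) atTop (nhds L) := by
    intro y hyΩ hyerr hyval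
    have hrec : ∀ j : ℕ, ‖x (j+1+1) - y‖^2 ≤ ‖x (j+1) - y‖^2 + b (j+1) := by
      intro j
      have hk : 1 ≤ j + 1 := Nat.le_add_left 1 j
      have hkey := key (j+1) hk y hyΩ (hyerr (j+1) hk)
      have hge : f y ≤ f (x (j+1)) := hyval ▸ hmin _ (hxΩ _ hk)
      have hb1 : b (j+1) = 2*(α (j+1)*ζ (j+1))*(2*(e (j+1)))
          + (α (j+1)*ζ (j+1))^2*G^2 := by simp [hbdef]
      have hαζ := hαζ0 (j+1) hk
      nlinarith [mul_le_mul_of_nonneg_left (sub_nonneg.mpr hge) hαζ]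
    obtain ⟨L, hL⟩ := quasi_fejer (a := fun j => ‖x (j+1) - y‖^2)
      (b := fun j => b (j+1)) (fun k => sq_nonneg _) (fun k => hbnn _)
      ((summable_nat_add_iff 1).2 hbs) hrec
    exact ⟨L, (tendsto_add_atTop_iff_nat 1).1 hL⟩
  -- summability of the objective gaps
  have herrstar : ∀ k, 1 ≤ k → |fk k xstar - f xstar| ≤ e k :=
    fun k _ => heb k xstar hxstarB
  have stepB : Summable (fun j : ℕ => 2*(α (j+1)*ζ (j+1))*(f (x (j+1)) - f xstar)) := by
    apply summable_of_telescope (a := fun j => ‖x (j+1) - xstar‖^2)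
      (b := fun j => b (j+1))
      (fun k => sq_nonneg _) (fun k => hbnn _)
      ?_ ((summable_nat_add_iff 1).2 hbs) ?_
    · intro j
      have hk : 1 ≤ j + 1 := Nat.le_add_left 1 j
      have h1 := hαζ0 (j+1) hk
      have h2 : 0 ≤ f (x (j+1)) - f xstar := sub_nonneg.mpr (hmin _ (hxΩ _ hk))
      nlinarith [mul_nonneg h1 h2]
    · intro j
      have hk : 1 ≤ j + 1 := Nat.le_add_left 1 j
      have hkey := key (j+1) hk xstar hxstarΩ (herrstar (j+1) hk)
      have hb1 : b (j+1) = 2*(α (j+1)*ζ (j+1))*(2*(e (j+1)))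
          + (α (j+1)*ζ (j+1))^2*G^2 := by simp [hbdef]
      rw [hb1]
      nlinarith [hkey]
  -- frequently near-optimal
  have stepC : ∀ j : ℕ, ∃ᶠ k in atTop, 1 ≤ k ∧ f (x k) < f xstar + 1/((j:ℝ)+1) := by
    intro j
    rcases Classical.em (∃ᶠ k in atTop, 1 ≤ k ∧ f (x k) < f xstar + 1/((j:ℝ)+1)) with h | h
    · exact h
    exfalso
    rw [Filter.not_frequently] at h
    simp only [not_and, not_lt] at h
    rw [eventually_atTop] at h
    obtain ⟨N, hN⟩ := h
    -- for large k the gap term dominates a constant times 1/k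
    set K := 2*C1*ζlo*(1/((j:ℝ)+1)) with hKdef
    have hK0 : 0 < K := by positivity
    have hcomp : Summable (fun m : ℕ => K * (1/((m + (N+1) : ℕ) : ℝ))) := by
      have hsum' : Summable (fun m : ℕ =>
          2*(α (m+N+1)*ζ (m+N+1))*(f (x (m+N+1)) - f xstar)) := by
        have := (summable_nat_add_iff (f := fun j : ℕ =>
          2*(α (j+1)*ζ (j+1))*(f (x (j+1)) - f xstar)) N).2 stepB
        apply this.congr
        intro m
        congr 2 <;> omega
      apply Summable.of_nonneg_of_le (fun m => by positivity) ?_ hsum'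
      intro m
      have hk : 1 ≤ m + N + 1 := Nat.le_add_left 1 _
      have hkN : N ≤ m + N + 1 := by omega
      have hgap : 1/((j:ℝ)+1) ≤ f (x (m+N+1)) - f xstar := by
        have := hN (m+N+1) hkN hk
        linarith
      have hlb := hαζlb (m+N+1) hk
      have hub := hαζ0 (m+N+1) hk
      have hkpos : (0:ℝ) < ((m+N+1 : ℕ) : ℝ) := hk0 _ hk
      have hgap0 : 0 ≤ f (x (m+N+1)) - f xstar :=
        sub_nonneg.mpr (hmin _ (hxΩ _ hk))
      have hcast : ((m + (N+1) : ℕ) : ℝ) = ((m+N+1 : ℕ) : ℝ) := by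
        push_cast; ring
      rw [hcast]
      calc K * (1/((m+N+1 : ℕ) : ℝ))
          = 2*(C1*ζlo/((m+N+1:ℕ):ℝ))*(1/((j:ℝ)+1)) := by rw [hKdef]; ring
        _ ≤ 2*(α (m+N+1)*ζ (m+N+1))*(1/((j:ℝ)+1)) := by
            apply mul_le_mul_of_nonneg_right _ (by positivity)
            linarith
        _ ≤ 2*(α (m+N+1)*ζ (m+N+1))*(f (x (m+N+1)) - f xstar) := by
            apply mul_le_mul_of_nonneg_left hgap (by linarith)
    have hharm : Summable (fun m : ℕ => (1:ℝ)/(m + (N+1) : ℕ)) := by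
      have := hcomp.mul_left (1/K)
      apply this.congr
      intro m
      field_simp
    have : Summable (fun m : ℕ => (1:ℝ)/(m : ℝ)) := by
      rw [← summable_nat_add_iff (N+1)]
      apply hharm.congr
      intro m
      norm_cast
    exact Real.not_summable_one_div_natCast this
  -- extract a subsequence approaching the optimal value
  obtain ⟨φ, hφmono, hφ⟩ := Filter.extraction_forall_of_frequently stepC
  -- compactness: convergent sub-subsequence
  obtain ⟨xhat, hxhatcl, ψ, hψmono, hψtend⟩ :=
    hK.tendsto_subseq (x := fun j => x (φ j))
      (fun j => subset_closure (hxB _ (hφ j).1))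
  have hxhatΩ : xhat ∈ Ω :=
    hΩclosed.mem_of_tendsto hψtend
      (Filter.Eventually.of_forall fun i => hxΩ _ (hφ (ψ i)).1)
  have hfval : f xhat = f xstar := by
    have h1 : Tendsto (fun i => f (x (φ (ψ i)))) atTop (nhds (f xhat)) :=
      (hfcont.tendsto xhat).comp hψtend
    have h2 : Tendsto (fun i : ℕ => f xstar + 1/((i:ℝ)+1)) atTop (nhds (f xstar)) := by
      have := tendsto_one_div_add_atTop_nhds_zero_nat (𝕜 := ℝ)
      have h3 := (tendsto_const_nhds (x := f xstar) (f := atTop (α := ℕ))).add this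
      simpa using h3
    have hle : f xhat ≤ f xstar := by
      apply le_of_tendsto_of_tendsto' h1 h2
      intro i
      have := (hφ (ψ i)).2
      have hmono : ((i:ℝ)+1) ≤ ((ψ i : ℝ)+1) := by
        have h4 : i ≤ ψ i := hψmono.le_apply
        have h5 : ((i:ℝ)) ≤ ((ψ i : ℕ) : ℝ) := Nat.cast_le.mpr h4
        linarith
      have hdiv : 1/((ψ i : ℝ)+1) ≤ 1/((i:ℝ)+1) :=
        one_div_le_one_div_of_le (by positivity) hmono
      linarith
    exact le_antisymm hle (hmin _ hxhatΩ)
  -- error control at xhat via closure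
  have herrhat : ∀ k, 1 ≤ k → |fk k xhat - f xhat| ≤ e k := by
    intro k _
    have hcl : closure B ⊆ {z | |fk k z - f z| ≤ e k} :=
      closure_minimal (fun z hz => heb k z hz)
        (isClosed_le (((hfkcont k).sub hfcont).abs) continuous_const)
    exact hcl hxhatcl
  -- conclude: distances to xhat converge, and converge to 0 along a subsequence
  obtain ⟨L, hL⟩ := stepA xhat hxhatΩ herrhat hfval
  have hsub0 : Tendsto (fun i => ‖x (φ (ψ i)) - xhat‖^2) atTop (nhds 0) := by
    have : Tendsto (fun i => x (φ (ψ i)) - xhat) atTop (nhds 0) := by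
      have := hψtend.sub (tendsto_const_nhds (x := xhat))
      simpa using this
    have h2 := (this.norm).pow 2
    simpa using h2
  have hsubL : Tendsto (fun i => ‖x (φ (ψ i)) - xhat‖^2) atTop (nhds L) :=
    hL.comp ((hφmono.comp hψmono).tendsto_atTop)
  have hL0 : L = 0 := tendsto_nhds_unique hsubL hsub0
  rw [hL0] at hL
  refine ⟨xhat, hxhatΩ, hfval, ?_⟩
  rw [tendsto_iff_norm_sub_tendsto_zero]
  have hsqrt : Tendsto (fun k => Real.sqrt (‖x k - xhat‖^2)) atTop (nhds (Real.sqrt 0)) :=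
    (Real.continuous_sqrt.tendsto 0).comp hL
  simp only [Real.sqrt_zero] at hsqrt
  apply hsqrt.congr
  intro k
  rw [Real.sqrt_sq (norm_nonneg _)]
end

section
/- Under the SPS iteration on a nonempty closed convex set Ω ⊆ E, suppose f : E → ℝ satisfies f(x*) ≤ f(x_k) for all k ≥ 1 for some x* ∈ Ω, there is G > 0 with ‖g_k‖ ≤ G for all k ≥ 1, and the errors ē_k := |f_k(x_k) − f(x_k)| + |f_k(x*) − f(x*)| satisfy Σ_{k≥1} ē_k/k < ∞. Then the iterate sequence is bounded: there exists C5 > 0 such that ‖x_k − x*‖ ≤ C5 for all k ≥ 1. -/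
open scoped RealInnerProductSpace
open Filter

/-- Proposition 1: under the SPS iteration on a nonempty closed convex set, if
`f(x*) ≤ f(x_k)` for all `k ≥ 1`, the subgradients are uniformly bounded and the
SAA errors `ē_k` satisfy `Σ ē_k/k < ∞`, then the iterates are bounded. -/
theorem sps_iterates_bounded {n : ℕ}
    (Ω : Set (EuclideanSpace ℝ (Fin n)))
    (hΩne : Ω.Nonempty) (hΩclosed : IsClosed Ω) (hΩconv : Convex ℝ Ω)
    (C1 C2 ζlo ζhi : ℝ)
    (hC1 : 0 < C1) (hC12 : C1 ≤ C2) (hζlo : 0 < ζlo) (hζlohi : ζlo ≤ ζhi)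
    (x : ℕ → EuclideanSpace ℝ (Fin n)) (hxΩ : ∀ k, 1 ≤ k → x k ∈ Ω)
    (fk : ℕ → EuclideanSpace ℝ (Fin n) → ℝ)
    (hfkconv : ∀ k, ConvexOn ℝ Set.univ (fk k))
    (g : ℕ → EuclideanSpace ℝ (Fin n))
    (hsub : ∀ k, 1 ≤ k → ∀ z, fk k (x k) + ⟪g k, z - x k⟫ ≤ fk k z)
    (ζ α : ℕ → ℝ)
    (hζ : ∀ k, 1 ≤ k → ζ k ∈ Set.Icc ζlo ζhi)
    (hα : ∀ k : ℕ, 1 ≤ k → α k ∈ Set.Icc (C1 / (k : ℝ)) (C2 / (k : ℝ)))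
    (hproj : ∀ k, 1 ≤ k → ∀ y ∈ Ω,
      ‖x (k + 1) - y‖ ≤ ‖(x k - (α k * ζ k) • g k) - y‖)
    (f : EuclideanSpace ℝ (Fin n) → ℝ)
    (xstar : EuclideanSpace ℝ (Fin n)) (hxstarΩ : xstar ∈ Ω)
    (hmin : ∀ k, 1 ≤ k → f xstar ≤ f (x k))
    (G : ℝ) (hG : 0 < G) (hgbd : ∀ k, 1 ≤ k → ‖g k‖ ≤ G)
    (ebar : ℕ → ℝ)
    (hebar : ∀ k, ebar k = |fk k (x k) - f (x k)| + |fk k xstar - f xstar|)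
    (hesum : Summable (fun k : ℕ => ebar k / k)) :
    ∃ C5 > (0 : ℝ), ∀ k, 1 ≤ k → ‖x k - xstar‖ ≤ C5 := by

  set c : ℕ → ℝ := fun k => 2 * C2 * ζhi * (ebar k / k) + (C2 * ζhi * G)^2 * (1 / (k:ℝ)^2) with hc
  have hζhi : 0 < ζhi := lt_of_lt_of_le hζlo hζlohi
  have hC2 : 0 < C2 := lt_of_lt_of_le hC1 hC12
  have hebarpos : ∀ k, 0 ≤ ebar k := by
    intro k; rw [hebar k]; positivity
  have hcnonneg : ∀ k, 0 ≤ c k := by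
    intro k
    have h1 : 0 ≤ ebar k / k := div_nonneg (hebarpos k) (Nat.cast_nonneg k)
    have : (0:ℝ) ≤ 2 * C2 * ζhi := by positivity
    have h2 : (0:ℝ) ≤ (C2 * ζhi * G)^2 * (1 / (k:ℝ)^2) := by positivity
    exact add_nonneg (mul_nonneg this h1) h2
  have hcsum : Summable c := by
    apply Summable.add
    · exact (hesum.mul_left (2 * C2 * ζhi))
    · apply Summable.mul_left
      simpa using (Real.summable_one_div_nat_pow.mpr (by norm_num : 1 < 2))
  -- key decrease inequality
  have key : ∀ k, 1 ≤ k → ‖x (k+1) - xstar‖^2 ≤ ‖x k - xstar‖^2 + c k := by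
    intro k hk
    have hk0 : (0:ℝ) < (k:ℝ) := by exact_mod_cast Nat.pos_of_ne_zero (by omega)
    set s := α k * ζ k with hs
    obtain ⟨hα1, hα2⟩ := hα k hk
    obtain ⟨hζ1, hζ2⟩ := hζ k hk
    have hαpos : 0 ≤ α k := le_trans (by positivity) hα1
    have hζpos : 0 ≤ ζ k := le_trans (le_of_lt hζlo) hζ1
    have hspos : 0 ≤ s := mul_nonneg hαpos hζpos
    have hsle : s ≤ C2 * ζhi / k := by
      rw [hs]
      calc α k * ζ k ≤ (C2 / k) * ζhi :=
            mul_le_mul hα2 hζ2 hζpos (by positivity)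
        _ = C2 * ζhi / k := by ring
    have h1 : ‖x (k+1) - xstar‖ ≤ ‖(x k - xstar) - s • g k‖ := by
      have := hproj k hk xstar hxstarΩ
      have heq : (x k - (α k * ζ k) • g k) - xstar = (x k - xstar) - s • g k := by
        rw [hs]; abel
      rwa [heq] at this
    have h2 : ‖(x k - xstar) - s • g k‖^2
        = ‖x k - xstar‖^2 - 2 * (s * ⟪g k, x k - xstar⟫) + s^2 * ‖g k‖^2 := by
      rw [norm_sub_sq_real, real_inner_smul_right, real_inner_comm, norm_smul]
      simp [Real.norm_eq_abs, abs_of_nonneg hspos, mul_pow]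
    -- inner product lower bound
    have hinner : -(ebar k) ≤ ⟪g k, x k - xstar⟫ := by
      have hsg := hsub k hk xstar
      have : ⟪g k, xstar - x k⟫ ≤ fk k xstar - fk k (x k) := by linarith
      have hflip : fk k (x k) - fk k xstar ≤ ⟪g k, x k - xstar⟫ := by
        have : ⟪g k, x k - xstar⟫ = -⟪g k, xstar - x k⟫ := by
          rw [← inner_neg_right]; congr 1; abel
        linarith [this]
      have hb1 : |fk k (x k) - f (x k)| + |fk k xstar - f xstar| = ebar k := (hebar k).symm
      have h3 : f (x k) - |fk k (x k) - f (x k)| ≤ fk k (x k) := by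
        have := abs_le.mp (le_refl |fk k (x k) - f (x k)|) |>.1; linarith [neg_abs_le (fk k (x k) - f (x k))]
      have h4 : fk k xstar ≤ f xstar + |fk k xstar - f xstar| := by
        linarith [le_abs_self (fk k xstar - f xstar)]
      have h5 : f xstar ≤ f (x k) := hmin k hk
      calc -(ebar k) = -( |fk k (x k) - f (x k)| + |fk k xstar - f xstar|) := by rw [hebar k]
        _ ≤ fk k (x k) - fk k xstar := by linarith
        _ ≤ ⟪g k, x k - xstar⟫ := hflip
    have hgk : ‖g k‖ ≤ G := hgbd k hk
    have hgk0 : 0 ≤ ‖g k‖ := norm_nonneg _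
    have hterm1 : -(2 * (s * ⟪g k, x k - xstar⟫)) ≤ 2 * C2 * ζhi * (ebar k / k) := by
      have : s * (-(ebar k)) ≤ s * ⟪g k, x k - xstar⟫ := mul_le_mul_of_nonneg_left hinner hspos
      have h6 : s * ebar k ≤ (C2 * ζhi / k) * ebar k :=
        mul_le_mul_of_nonneg_right hsle (hebarpos k)
      have : -(2 * (s * ⟪g k, x k - xstar⟫)) ≤ 2 * (s * ebar k) := by nlinarith
      calc -(2 * (s * ⟪g k, x k - xstar⟫)) ≤ 2 * (s * ebar k) := this
        _ ≤ 2 * ((C2 * ζhi / k) * ebar k) := by linarith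
        _ = 2 * C2 * ζhi * (ebar k / k) := by field_simp
    have hterm2 : s^2 * ‖g k‖^2 ≤ (C2 * ζhi * G)^2 * (1 / (k:ℝ)^2) := by
      have h7 : s * ‖g k‖ ≤ (C2 * ζhi / k) * G :=
        mul_le_mul hsle hgk hgk0 (by positivity)
      have h8 : 0 ≤ s * ‖g k‖ := mul_nonneg hspos hgk0
      have : (s * ‖g k‖)^2 ≤ ((C2 * ζhi / k) * G)^2 := by
        apply pow_le_pow_left₀ h8 h7
      calc s^2 * ‖g k‖^2 = (s * ‖g k‖)^2 := by ring
        _ ≤ ((C2 * ζhi / k) * G)^2 := this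
        _ = (C2 * ζhi * G)^2 * (1 / (k:ℝ)^2) := by field_simp
    have hsq : ‖x (k+1) - xstar‖^2 ≤ ‖(x k - xstar) - s • g k‖^2 := by
      apply pow_le_pow_left₀ (norm_nonneg _) h1
    rw [h2] at hsq
    calc ‖x (k+1) - xstar‖^2
        ≤ ‖x k - xstar‖^2 - 2 * (s * ⟪g k, x k - xstar⟫) + s^2 * ‖g k‖^2 := hsq
      _ ≤ ‖x k - xstar‖^2 + 2 * C2 * ζhi * (ebar k / k) + (C2 * ζhi * G)^2 * (1 / (k:ℝ)^2) := by
          linarith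
      _ = ‖x k - xstar‖^2 + c k := by rw [hc]; ring
  -- telescoping bound
  have hpartial : ∀ k, 1 ≤ k → ‖x k - xstar‖^2 ≤ ‖x 1 - xstar‖^2 + ∑ j ∈ Finset.Ico 1 k, c j := by
    intro k hk
    induction k with
    | zero => omega
    | succ m ih =>
      rcases Nat.lt_or_ge 1 (m+1) with hm | hm
      · have hm1 : 1 ≤ m := by omega
        have := key m hm1
        have hsum : ∑ j ∈ Finset.Ico 1 (m+1), c j = (∑ j ∈ Finset.Ico 1 m, c j) + c m := by
          rw [Finset.sum_Ico_succ_top hm1]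
        rw [hsum]
        linarith [ih hm1]
      · have : m + 1 = 1 := by omega
        rw [this]; simp
  have htsum : ∀ k, 1 ≤ k → ∑ j ∈ Finset.Ico 1 k, c j ≤ ∑' j, c j := by
    intro k hk
    exact Summable.sum_le_tsum _ (fun j _ => hcnonneg j) hcsum
  set B := ‖x 1 - xstar‖^2 + ∑' j, c j with hB
  have hBnn : 0 ≤ B := by
    have : 0 ≤ ∑' j, c j := tsum_nonneg hcnonneg
    positivity
  refine ⟨Real.sqrt B + 1, by positivity, fun k hk => ?_⟩
  have hbd : ‖x k - xstar‖^2 ≤ B := le_trans (hpartial k hk) (by linarith [htsum k hk])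
  have : ‖x k - xstar‖ ≤ Real.sqrt B := by
    rw [show ‖x k - xstar‖ = Real.sqrt (‖x k - xstar‖^2) by
      rw [Real.sqrt_sq (norm_nonneg _)]]
    exact Real.sqrt_le_sqrt hbd
  linarith
end

section
/- Under the SPS iteration on a nonempty closed convex set Ω ⊆ E, suppose f : E → ℝ is convex and continuous, x* ∈ Ω satisfies f(x*) ≤ f(y) for all y ∈ Ω, there is G > 0 with ‖g_k‖ ≤ G for all k ≥ 1, the errors ē_k := |f_k(x_k) − f(x_k)| + |f_k(x*) − f(x*)| satisfy Σ_{k≥1} ē_k/k < ∞, and for every compact set K ⊆ E one has sup_{x ∈ K} |f_k(x) − f(x)| → 0 as k → ∞. Then liminf_{k→∞} f(x_k) = f(x*). -/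
open scoped RealInnerProductSpace
open Filter

/-- Theorem 4, part 1 (pathwise): SPS iteration on a nonempty closed convex set; with
summable errors `Σ ē_k/k < ∞` (which yields bounded iterates) and uniform convergence
of `f_k` to `f` on compact sets, one has `liminf f(x_k) = f(x*)`. -/
theorem sps_liminf_optimal_closed {n : ℕ}
    (Ω : Set (EuclideanSpace ℝ (Fin n)))
    (hΩne : Ω.Nonempty) (hΩclosed : IsClosed Ω) (hΩconv : Convex ℝ Ω)
    (C1 C2 ζlo ζhi : ℝ)
    (hC1 : 0 < C1) (hC12 : C1 ≤ C2) (hζlo : 0 < ζlo) (hζlohi : ζlo ≤ ζhi)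
    (x : ℕ → EuclideanSpace ℝ (Fin n)) (hxΩ : ∀ k, 1 ≤ k → x k ∈ Ω)
    (fk : ℕ → EuclideanSpace ℝ (Fin n) → ℝ)
    (hfkconv : ∀ k, ConvexOn ℝ Set.univ (fk k))
    (g : ℕ → EuclideanSpace ℝ (Fin n))
    (hsub : ∀ k, 1 ≤ k → ∀ z, fk k (x k) + ⟪g k, z - x k⟫ ≤ fk k z)
    (ζ α : ℕ → ℝ)
    (hζ : ∀ k, 1 ≤ k → ζ k ∈ Set.Icc ζlo ζhi)
    (hα : ∀ k : ℕ, 1 ≤ k → α k ∈ Set.Icc (C1 / (k : ℝ)) (C2 / (k : ℝ)))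
    (hproj : ∀ k, 1 ≤ k → ∀ y ∈ Ω,
      ‖x (k + 1) - y‖ ≤ ‖(x k - (α k * ζ k) • g k) - y‖)
    (f : EuclideanSpace ℝ (Fin n) → ℝ)
    (hfconv : ConvexOn ℝ Set.univ f) (hfcont : Continuous f)
    (xstar : EuclideanSpace ℝ (Fin n)) (hxstarΩ : xstar ∈ Ω)
    (hmin : ∀ y ∈ Ω, f xstar ≤ f y)
    (G : ℝ) (hG : 0 < G) (hgbd : ∀ k, 1 ≤ k → ‖g k‖ ≤ G)
    (ebar : ℕ → ℝ)
    (hebar : ∀ k, ebar k = |fk k (x k) - f (x k)| + |fk k xstar - f xstar|)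
    (hesum : Summable (fun k : ℕ => ebar k / k))
    (hucc : ∀ K : Set (EuclideanSpace ℝ (Fin n)), IsCompact K →
      Tendsto (fun k => sSup ((fun z => |fk k z - f z|) '' K)) atTop (nhds 0)) :
    liminf (fun k => f (x k)) atTop = f xstar := by
  -- squared distances to the minimizer
  set a : ℕ → ℝ := fun k => ‖x k - xstar‖ ^ 2 with ha
  -- summable error bound sequence
  set b : ℕ → ℝ := fun k => 2 * C2 * ζhi * (ebar k / k)
      + (C2 * ζhi * G) ^ 2 * (1 / (k : ℝ) ^ 2) with hb
  have hC2 : 0 < C2 := hC1.trans_le hC12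
  have hζhi : 0 < ζhi := hζlo.trans_le hζlohi
  have hebnn : ∀ k, 0 ≤ ebar k := by
    intro k; rw [hebar k]; positivity
  have hbnn : ∀ k, 0 ≤ b k := by
    intro k
    have h1 : 0 ≤ ebar k / k := div_nonneg (hebnn k) (Nat.cast_nonneg k)
    have h2 : (0:ℝ) < 2 * C2 * ζhi := mul_pos (mul_pos two_pos hC2) hζhi
    have : (0:ℝ) ≤ 1 / (k:ℝ)^2 := by positivity
    simp only [hb]
    nlinarith
  have hbsum : Summable b := by
    refine Summable.add (hesum.mul_left _) (Summable.mul_left _ ?_)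
    exact (Real.summable_one_div_nat_pow (p := 2)).2 one_lt_two
  set B := ∑' i, b i with hB
  -- key per-step inequality
  have key : ∀ k, 1 ≤ k →
      2 * (C1 * ζlo) * ((f (x k) - f xstar) / k) ≤ a k - a (k + 1) + b k := by
    intro k hk
    have hk0 : (0:ℝ) < k := by exact_mod_cast hk
    obtain ⟨hα1, hα2⟩ := hα k hk
    obtain ⟨hζ1, hζ2⟩ := hζ k hk
    have hαpos : 0 < α k := lt_of_lt_of_le (div_pos hC1 hk0) hα1
    have hζpos : 0 < ζ k := lt_of_lt_of_le hζlo hζ1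
    set c := α k * ζ k with hc
    have hcpos : 0 < c := mul_pos hαpos hζpos
    have hclb : (C1 / k) * ζlo ≤ c :=
      mul_le_mul hα1 hζ1 hζlo.le hαpos.le
    have hcub : c ≤ (C2 / k) * ζhi :=
      mul_le_mul hα2 hζ2 hζpos.le (div_pos (hC1.trans_le hC12) hk0).le
    have hproj' := hproj k hk xstar hxstarΩ
    have hrw : x k - c • g k - xstar = (x k - xstar) - c • g k := by
      abel
    have hsq : a (k + 1) ≤ ‖(x k - xstar) - c • g k‖ ^ 2 := by
      rw [← hrw]
      exact pow_le_pow_left₀ (norm_nonneg _) hproj' 2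
    have hexp : ‖(x k - xstar) - c • g k‖ ^ 2
        = a k - 2 * c * ⟪g k, x k - xstar⟫ + c ^ 2 * ‖g k‖ ^ 2 := by
      rw [norm_sub_sq_real, real_inner_smul_right, real_inner_comm, norm_smul,
        Real.norm_eq_abs, mul_pow, sq_abs]
      ring
    -- subgradient inequality
    have hinner : f (x k) - f xstar - ebar k ≤ ⟪g k, x k - xstar⟫ := by
      have h := hsub k hk xstar
      have h2 : ⟪g k, xstar - x k⟫ = -⟪g k, x k - xstar⟫ := by
        rw [← inner_neg_right]; congr 1; abel
      rw [h2] at h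
      have A : f (x k) - fk k (x k) ≤ |fk k (x k) - f (x k)| := by
        rw [abs_sub_comm]; exact le_abs_self _
      have Bb : fk k xstar - f xstar ≤ |fk k xstar - f xstar| := le_abs_self _
      rw [hebar k]
      linarith
    have hfge : 0 ≤ f (x k) - f xstar := sub_nonneg.2 (hmin _ (hxΩ k hk))
    have hgb := hgbd k hk
    have hg0 : (0:ℝ) ≤ ‖g k‖ := norm_nonneg _
    have p1 : 2 * ((C1 / k) * ζlo) * (f (x k) - f xstar)
        ≤ 2 * c * (f (x k) - f xstar) :=
      mul_le_mul_of_nonneg_right (by linarith) hfge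
    have p2 : 2 * c * (f (x k) - f xstar - ebar k) ≤ 2 * c * ⟪g k, x k - xstar⟫ :=
      mul_le_mul_of_nonneg_left hinner (by linarith)
    have p3 : 2 * c * ebar k ≤ 2 * ((C2 / k) * ζhi) * ebar k :=
      mul_le_mul_of_nonneg_right (by linarith) (hebnn k)
    have p4 : c ^ 2 * ‖g k‖ ^ 2 ≤ ((C2 / k) * ζhi * G) ^ 2 := by
      have h1 : c * ‖g k‖ ≤ ((C2 / k) * ζhi) * G :=
        mul_le_mul hcub hgb hg0 (mul_nonneg (div_pos hC2 hk0).le hζhi.le)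
      have h2 : (c * ‖g k‖) ^ 2 ≤ (((C2 / k) * ζhi) * G) ^ 2 :=
        pow_le_pow_left₀ (mul_nonneg hcpos.le hg0) h1 2
      calc c ^ 2 * ‖g k‖ ^ 2 = (c * ‖g k‖) ^ 2 := by ring
        _ ≤ _ := h2
    have hkne : (k:ℝ) ≠ 0 := ne_of_gt hk0
    have hid1 : 2 * (C1 * ζlo) * ((f (x k) - f xstar) / k)
        = 2 * ((C1 / k) * ζlo) * (f (x k) - f xstar) := by
      field_simp
    have hid2 : 2 * ((C2 / k) * ζhi) * ebar k = 2 * C2 * ζhi * (ebar k / k) := by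
      field_simp
    have hid3 : ((C2 / k) * ζhi * G) ^ 2 = (C2 * ζhi * G) ^ 2 * (1 / (k:ℝ) ^ 2) := by
      field_simp
    simp only [hb]
    rw [hid1]
    rw [hid2] at p3
    rw [hid3] at p4
    rw [hexp] at hsq
    linarith
  -- the normalized optimality gaps are summable
  set Dq : ℕ → ℝ := fun i => (f (x (i + 1)) - f xstar) / (i + 1 : ℕ) with hDq
  have hDnn : ∀ i, 0 ≤ Dq i := by
    intro i
    exact div_nonneg (sub_nonneg.2 (hmin _ (hxΩ (i + 1) (by omega)))) (by positivity)
  have hpartial : ∀ m, ∑ i ∈ Finset.range m, Dq i ≤ (a 1 + B) / (2 * (C1 * ζlo)) := by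
    intro m
    have hsum1 : ∑ i ∈ Finset.range m, 2 * (C1 * ζlo) * Dq i
        ≤ ∑ i ∈ Finset.range m, ((a (i + 1) - a (i + 1 + 1)) + b (i + 1)) := by
      refine Finset.sum_le_sum fun i _ => ?_
      have := key (i + 1) (by omega)
      simpa [hDq] using this
    rw [Finset.sum_add_distrib] at hsum1
    have htel : ∑ i ∈ Finset.range m, (a (i + 1) - a (i + 1 + 1))
        = a 1 - a (m + 1) := Finset.sum_range_sub' (fun i => a (i + 1)) m
    have hbsum_le : ∑ i ∈ Finset.range m, b (i + 1) ≤ B := by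
      have h0 : b 0 = 0 := by simp [hb]
      have hs := Finset.sum_range_succ' b m
      have hts := Summable.sum_le_tsum (Finset.range (m + 1)) (fun i _ => hbnn i) hbsum
      rw [hs, h0, add_zero] at hts
      exact hts
    have ham : 0 ≤ a (m + 1) := by rw [ha]; positivity
    have hfin : 2 * (C1 * ζlo) * ∑ i ∈ Finset.range m, Dq i ≤ a 1 + B := by
      rw [htel] at hsum1
      rw [Finset.mul_sum]
      linarith
    rw [le_div_iff₀ (by positivity)]
    linarith
  have hDsum : Summable Dq := summable_of_sum_range_le hDnn hpartial
  -- frequently near-optimal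
  have hfreq : ∀ ε : ℝ, 0 < ε → ∃ᶠ k in atTop, f (x k) ≤ f xstar + ε := by
    intro ε hε
    by_contra hcon
    rw [not_frequently] at hcon
    obtain ⟨K, hK⟩ := eventually_atTop.1 hcon
    have hcomp : ∀ i : ℕ, ε / ((i : ℝ) + K + 1) ≤ Dq (i + K) := by
      intro i
      have hgt : ¬ f (x (i + K + 1)) ≤ f xstar + ε := hK (i + K + 1) (by omega)
      push_neg at hgt
      have hεle : ε ≤ f (x (i + K + 1)) - f xstar := by linarith
      have hd : (0:ℝ) < (i : ℝ) + K + 1 := by positivity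
      have : ε / ((i : ℝ) + K + 1) ≤ (f (x (i + K + 1)) - f xstar) / ((i : ℝ) + K + 1) := by
        gcongr
      simpa [hDq, Nat.cast_add, Nat.cast_one, add_assoc, add_comm, add_left_comm] using this
    have hsum2 : Summable (fun i : ℕ => ε / ((i : ℝ) + K + 1)) := by
      refine Summable.of_nonneg_of_le (fun i => by positivity) hcomp ?_
      exact (summable_nat_add_iff K).2 hDsum
    have hsum3 : Summable (fun i : ℕ => 1 / ((i : ℝ) + K + 1)) := by
      have := hsum2.mul_left ε⁻¹
      refine this.congr fun i => ?_
      field_simp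
    have hsum4 : Summable (fun i : ℕ => 1 / ((i : ℝ) + 1)) := by
      have : Summable (fun i : ℕ => (fun j : ℕ => 1 / ((j : ℝ) + 1)) (i + K)) := by
        refine hsum3.congr fun i => ?_
        push_cast; ring_nf
      exact (summable_nat_add_iff K).1 this
    have hsum5 : Summable (fun i : ℕ => 1 / (i : ℝ)) := by
      have : Summable (fun i : ℕ => (fun j : ℕ => 1 / (j : ℝ)) (i + 1)) := by
        refine hsum4.congr fun i => ?_
        push_cast; ring_nf
      exact (summable_nat_add_iff 1).1 this
    exact Real.not_summable_one_div_natCast hsum5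
  -- conclude about the liminf
  have hlb : ∀ᶠ k in atTop, f xstar ≤ f (x k) :=
    eventually_atTop.2 ⟨1, fun k hk => hmin _ (hxΩ k hk)⟩
  have hbdd : IsBoundedUnder (· ≥ ·) atTop (fun k => f (x k)) := ⟨f xstar, hlb⟩
  have hcob : IsCoboundedUnder (· ≥ ·) atTop (fun k => f (x k)) :=
    IsCoboundedUnder.of_frequently_le (a := f xstar + 1) (hfreq 1 one_pos)
  refine le_antisymm ?_ (le_liminf_of_le hcob hlb)
  refine le_of_forall_pos_le_add fun ε hε => ?_
  exact liminf_le_of_frequently_le (hfreq ε hε) hbdd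
end

section
/- Under the SPS iteration on a nonempty closed convex set Ω ⊆ E, suppose f : E → ℝ is convex and continuous, x* ∈ Ω satisfies f(x*) ≤ f(y) for all y ∈ Ω, there is G > 0 with ‖g_k‖ ≤ G for all k ≥ 1, the errors ē_k := |f_k(x_k) − f(x_k)| + |f_k(x*) − f(x*)| satisfy Σ_{k≥1} ē_k/k < ∞, and for every compact set K ⊆ E one has Σ_{k≥1} (1/k)·sup_{x ∈ K} |f_k(x) − f(x)| < ∞. Then there exists x̂ ∈ Ω with f(x̂) = f(x*) such that x_k → x̂ as k → ∞. -/
open scoped RealInnerProductSpace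
open Filter

lemma aux_quasi_fejer (a b : ℕ → ℝ) (ha0 : ∀ k, 0 ≤ a k) (hb0 : ∀ k, 1 ≤ k → 0 ≤ b k)
    (hbs : Summable (fun k => b (k + 1)))
    (hstep : ∀ k, 1 ≤ k → a (k + 1) ≤ a k + b k)
    (hfreq : ∀ ε > 0, ∃ᶠ k in atTop, a k < ε) :
    Tendsto a atTop (nhds 0) := by
  rw [Metric.tendsto_atTop]
  intro ε hε
  set c : ℕ → ℝ := fun k => b (k + 1) with hc
  have hc0 : ∀ i, 0 ≤ c i := fun i => hb0 (i + 1) (Nat.le_add_left 1 i)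
  have htail : Tendsto (fun i => ∑' k, c (k + i)) atTop (nhds 0) := tendsto_sum_nat_add c
  obtain ⟨N0, hN0⟩ := (Metric.tendsto_atTop.mp htail) (ε / 2) (by linarith)
  have hT : ∑' k, c (k + N0) < ε / 2 := by
    have := hN0 N0 le_rfl
    have h0 : (0:ℝ) ≤ ∑' k, c (k + N0) := tsum_nonneg (fun i => hc0 _)
    rw [Real.dist_eq, sub_zero, abs_of_nonneg h0] at this
    exact this
  have hTsummable : Summable (fun k => c (k + N0)) := (summable_nat_add_iff N0).mpr hbs
  obtain ⟨k0, hk0ge, hk0⟩ := (frequently_atTop.mp (hfreq (ε / 2) (by linarith))) (N0 + 1)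
  refine ⟨k0, fun m hm => ?_⟩
  have hk01 : 1 ≤ k0 := le_trans (Nat.le_add_left 1 N0) hk0ge
  have claim : ∀ m, k0 ≤ m → a m ≤ a k0 + ∑ j ∈ Finset.Ico k0 m, b j := by
    intro m hm
    induction m, hm using Nat.le_induction with
    | base => simp
    | succ m hm ih =>
      have h1 : a (m + 1) ≤ a m + b m := hstep m (le_trans hk01 hm)
      have h2 : ∑ j ∈ Finset.Ico k0 (m + 1), b j = (∑ j ∈ Finset.Ico k0 m, b j) + b m := by
        rw [Finset.sum_Ico_succ_top hm]
      linarith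
  have hsumle : ∑ j ∈ Finset.Ico k0 m, b j ≤ ∑' k, c (k + N0) := by
    have hsub : Finset.Ico k0 m ⊆ Finset.Ico (N0 + 1) m :=
      Finset.Ico_subset_Ico hk0ge le_rfl
    have h1 : ∑ j ∈ Finset.Ico k0 m, b j ≤ ∑ j ∈ Finset.Ico (N0 + 1) m, b j := by
      refine Finset.sum_le_sum_of_subset_of_nonneg hsub (fun j hj _ => ?_)
      exact hb0 j (le_trans (Nat.le_add_left 1 N0) (Finset.mem_Ico.mp hj).1)
    have h2 : ∑ j ∈ Finset.Ico (N0 + 1) m, b j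
        = ∑ i ∈ Finset.range (m - (N0 + 1)), c (i + N0) := by
      rw [Finset.sum_Ico_eq_sum_range]
      refine Finset.sum_congr rfl (fun i _ => ?_)
      show b (N0 + 1 + i) = b (i + N0 + 1)
      ring_nf
    have h3 : ∑ i ∈ Finset.range (m - (N0 + 1)), c (i + N0) ≤ ∑' k, c (k + N0) :=
      Summable.sum_le_tsum _ (fun i _ => hc0 _) hTsummable
    linarith
  have := claim m hm
  rw [Real.dist_eq, sub_zero, abs_of_nonneg (ha0 m)]
  linarith

set_option maxHeartbeats 1000000 in
/-- Theorem 4, part 2 (pathwise): SPS iteration on a nonempty closed convex set; with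
summable errors `Σ ē_k/k < ∞` and summable weighted uniform errors on compact sets,
the iterates converge to a minimizer. -/
theorem sps_convergence_closed {n : ℕ}
    (Ω : Set (EuclideanSpace ℝ (Fin n)))
    (hΩne : Ω.Nonempty) (hΩclosed : IsClosed Ω) (hΩconv : Convex ℝ Ω)
    (C1 C2 ζlo ζhi : ℝ)
    (hC1 : 0 < C1) (hC12 : C1 ≤ C2) (hζlo : 0 < ζlo) (hζlohi : ζlo ≤ ζhi)
    (x : ℕ → EuclideanSpace ℝ (Fin n)) (hxΩ : ∀ k, 1 ≤ k → x k ∈ Ω)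
    (fk : ℕ → EuclideanSpace ℝ (Fin n) → ℝ)
    (hfkconv : ∀ k, ConvexOn ℝ Set.univ (fk k))
    (g : ℕ → EuclideanSpace ℝ (Fin n))
    (hsub : ∀ k, 1 ≤ k → ∀ z, fk k (x k) + ⟪g k, z - x k⟫ ≤ fk k z)
    (ζ α : ℕ → ℝ)
    (hζ : ∀ k, 1 ≤ k → ζ k ∈ Set.Icc ζlo ζhi)
    (hα : ∀ k : ℕ, 1 ≤ k → α k ∈ Set.Icc (C1 / (k : ℝ)) (C2 / (k : ℝ)))
    (hproj : ∀ k, 1 ≤ k → ∀ y ∈ Ω,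
      ‖x (k + 1) - y‖ ≤ ‖(x k - (α k * ζ k) • g k) - y‖)
    (f : EuclideanSpace ℝ (Fin n) → ℝ)
    (hfconv : ConvexOn ℝ Set.univ f) (hfcont : Continuous f)
    (xstar : EuclideanSpace ℝ (Fin n)) (hxstarΩ : xstar ∈ Ω)
    (hmin : ∀ y ∈ Ω, f xstar ≤ f y)
    (G : ℝ) (hG : 0 < G) (hgbd : ∀ k, 1 ≤ k → ‖g k‖ ≤ G)
    (ebar : ℕ → ℝ)
    (hebar : ∀ k, ebar k = |fk k (x k) - f (x k)| + |fk k xstar - f xstar|)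
    (hesum : Summable (fun k : ℕ => ebar k / k))
    (huccsum : ∀ K : Set (EuclideanSpace ℝ (Fin n)), IsCompact K →
      Summable (fun k : ℕ => (1 / (k : ℝ)) * sSup ((fun z => |fk k z - f z|) '' K))) :
    ∃ xhat ∈ Ω, f xhat = f xstar ∧ Tendsto x atTop (nhds xhat) := by
  classical
  set t : ℕ → ℝ := fun k => α k * ζ k with htdef
  -- basic bounds on t
  have hkpos : ∀ k : ℕ, 1 ≤ k → (0:ℝ) < k := by
    intro k hk; exact_mod_cast hk
  have ht0 : ∀ k, 1 ≤ k → 0 ≤ t k := by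
    intro k hk
    have h1 := (hα k hk).1
    have h2 := (hζ k hk).1
    have : (0:ℝ) < C1 / k := div_pos hC1 (hkpos k hk)
    have hζk : 0 < ζ k := lt_of_lt_of_le hζlo h2
    exact le_of_lt (mul_pos (lt_of_lt_of_le this h1) hζk)
  have htub : ∀ k, 1 ≤ k → t k ≤ C2 * ζhi / k := by
    intro k hk
    have h1 := (hα k hk).2
    have h2 := (hζ k hk).2
    have hα0 : 0 ≤ α k := le_trans (le_of_lt (div_pos hC1 (hkpos k hk))) (hα k hk).1
    have hζ0 : 0 ≤ ζ k := le_trans (le_of_lt hζlo) (hζ k hk).1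
    have hC2 : (0:ℝ) < C2 := lt_of_lt_of_le hC1 hC12
    have hd : (0:ℝ) ≤ C2 / k := le_of_lt (div_pos hC2 (hkpos k hk))
    calc α k * ζ k ≤ (C2 / k) * ζhi := mul_le_mul h1 h2 hζ0 hd
      _ = C2 * ζhi / k := by ring
  have htlb : ∀ k, 1 ≤ k → C1 * ζlo / k ≤ t k := by
    intro k hk
    have h1 := (hα k hk).1
    have h2 := (hζ k hk).1
    have hα0 : 0 ≤ C1 / (k:ℝ) := le_of_lt (div_pos hC1 (hkpos k hk))
    calc C1 * ζlo / k = (C1 / k) * ζlo := by ring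
      _ ≤ α k * ζ k := mul_le_mul h1 h2 (le_of_lt hζlo) (le_trans hα0 h1)
  -- the key one-step inequality
  have key : ∀ k, 1 ≤ k → ∀ y ∈ Ω,
      ‖x (k+1) - y‖^2 ≤ ‖x k - y‖^2 - 2 * t k * (f (x k) - f y)
        + (2 * t k * (|fk k (x k) - f (x k)| + |fk k y - f y|) + t k ^ 2 * G ^ 2) := by
    intro k hk y hy
    have ht0k := ht0 k hk
    have hn : ‖x (k+1) - y‖ ≤ ‖(x k - t k • g k) - y‖ := hproj k hk y hy
    have hsq : ‖x (k+1) - y‖^2 ≤ ‖(x k - t k • g k) - y‖^2 :=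
      pow_le_pow_left₀ (norm_nonneg _) hn 2
    have hre : (x k - t k • g k) - y = (x k - y) - t k • g k := by
      abel
    have hexp : ‖(x k - y) - t k • g k‖^2
        = ‖x k - y‖^2 - 2 * (t k * ⟪g k, x k - y⟫) + t k^2 * ‖g k‖^2 := by
      rw [norm_sub_sq_real, real_inner_smul_right, norm_smul, real_inner_comm,
        mul_pow, Real.norm_eq_abs, sq_abs]
    have hip : fk k (x k) - fk k y ≤ ⟪g k, x k - y⟫ := by
      have h1 := hsub k hk y
      have h2 : ⟪g k, y - x k⟫ = -⟪g k, x k - y⟫ := by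
        rw [show y - x k = -(x k - y) by abel, inner_neg_right]
      rw [h2] at h1
      linarith
    have habs1 : f (x k) - |fk k (x k) - f (x k)| ≤ fk k (x k) := by
      have := neg_abs_le (fk k (x k) - f (x k))
      linarith
    have habs2 : fk k y ≤ f y + |fk k y - f y| := by
      have := le_abs_self (fk k y - f y)
      linarith
    have hip2 : (f (x k) - f y) - (|fk k (x k) - f (x k)| + |fk k y - f y|)
        ≤ ⟪g k, x k - y⟫ := by linarith
    have hgsq : ‖g k‖^2 ≤ G^2 := pow_le_pow_left₀ (norm_nonneg _) (hgbd k hk) 2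
    have h3 : t k^2 * ‖g k‖^2 ≤ t k^2 * G^2 :=
      mul_le_mul_of_nonneg_left hgsq (sq_nonneg _)
    have h4 : 2 * t k * ((f (x k) - f y) - (|fk k (x k) - f (x k)| + |fk k y - f y|))
        ≤ 2 * t k * ⟪g k, x k - y⟫ :=
      mul_le_mul_of_nonneg_left hip2 (by linarith)
    rw [hre] at hsq
    rw [hexp] at hsq
    nlinarith [hsq, h3, h4]
  -- nonnegativity of errors
  have hebar0 : ∀ k, 0 ≤ ebar k := by
    intro k; rw [hebar k]; positivity
  -- general summability of the shifted error terms
  have hbsum_gen : ∀ (e : ℕ → ℝ), (∀ k, 0 ≤ e k) → Summable (fun k : ℕ => e k / k) →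
      Summable (fun k : ℕ => 2 * t (k+1) * e (k+1) + t (k+1)^2 * G^2) := by
    intro e he0 hes
    have h1 : Summable (fun k : ℕ =>
        2 * (C2 * ζhi) * (e (k+1) / ((k+1 : ℕ) : ℝ))
          + (C2*ζhi)^2 * G^2 * (1/(((k+1 : ℕ) : ℝ))^2)) := by
      apply Summable.add
      · exact ((summable_nat_add_iff 1).mpr hes).mul_left _
      · have hs2 : Summable (fun k : ℕ => 1/((k:ℝ))^2) :=
          Real.summable_one_div_nat_pow.mpr one_lt_two
        exact ((summable_nat_add_iff 1).mpr hs2).mul_left _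
    refine Summable.of_nonneg_of_le (fun k => ?_) (fun k => ?_) h1
    · have := ht0 (k+1) (Nat.le_add_left 1 k)
      have := he0 (k+1)
      positivity
    · have hk1 : (0:ℝ) < ((k+1 : ℕ) : ℝ) := by positivity
      have hub := htub (k+1) (Nat.le_add_left 1 k)
      have hlb := ht0 (k+1) (Nat.le_add_left 1 k)
      have hA : 2 * t (k+1) * e (k+1) ≤ 2 * (C2 * ζhi) * (e (k+1) / ((k+1 : ℕ) : ℝ)) := by
        have h := mul_le_mul_of_nonneg_right hub (he0 (k+1))
        calc 2 * t (k+1) * e (k+1) = 2 * (t (k+1) * e (k+1)) := by ring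
          _ ≤ 2 * ((C2 * ζhi / ((k+1:ℕ):ℝ)) * e (k+1)) := by linarith
          _ = 2 * (C2 * ζhi) * (e (k+1) / ((k+1 : ℕ) : ℝ)) := by ring
      have hB : t (k+1)^2 * G^2 ≤ (C2*ζhi)^2 * G^2 * (1/(((k+1 : ℕ) : ℝ))^2) := by
        have h := pow_le_pow_left₀ hlb hub 2
        have h2 : (C2 * ζhi / ((k+1:ℕ):ℝ))^2 = (C2*ζhi)^2 * (1/(((k+1 : ℕ) : ℝ))^2) := by
          field_simp
        have h3 : t (k+1)^2 * G^2 ≤ (C2 * ζhi / ((k+1:ℕ):ℝ))^2 * G^2 :=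
          mul_le_mul_of_nonneg_right h (by positivity)
        rw [h2] at h3
        linarith [h3]
      linarith
  -- the b sequence at xstar
  set b : ℕ → ℝ := fun k => 2 * t k * ebar k + t k ^ 2 * G ^ 2 with hbdef
  have hb0 : ∀ k, 1 ≤ k → 0 ≤ b k := by
    intro k hk
    have := ht0 k hk
    have := hebar0 k
    simp only [hbdef]
    positivity
  have hbsum : Summable (fun k => b (k+1)) := hbsum_gen ebar hebar0 hesum
  set B : ℝ := ∑' i, b (i+1) with hBdef
  have hB0 : 0 ≤ B := tsum_nonneg (fun i => hb0 (i+1) (Nat.le_add_left 1 i))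
  set a : ℕ → ℝ := fun k => ‖x k - xstar‖^2 with hadef
  have ha0 : ∀ k, 0 ≤ a k := fun k => sq_nonneg _
  have hΔ0 : ∀ k, 1 ≤ k → 0 ≤ f (x k) - f xstar := by
    intro k hk; have := hmin (x k) (hxΩ k hk); linarith
  have hstep_star : ∀ k, 1 ≤ k →
      a (k+1) ≤ a k - 2 * t k * (f (x k) - f xstar) + b k := by
    intro k hk
    have := key k hk xstar hxstarΩ
    simp only [hadef, hbdef]
    rw [hebar k]
    linarith [this]
  have hstep_star' : ∀ k, 1 ≤ k → a (k+1) ≤ a k + b k := by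
    intro k hk
    have h1 := hstep_star k hk
    have h2 := hΔ0 k hk
    have h3 := ht0 k hk
    nlinarith
  -- boundedness of the iterates
  have habd : ∀ k, 1 ≤ k → a k ≤ a 1 + B := by
    have claim1 : ∀ k, 1 ≤ k → a k ≤ a 1 + ∑ j ∈ Finset.Ico 1 k, b j := by
      intro k hk
      induction k, hk using Nat.le_induction with
      | base => simp
      | succ k hk ih =>
        have h1 := hstep_star' k hk
        have h2 : ∑ j ∈ Finset.Ico 1 (k + 1), b j = (∑ j ∈ Finset.Ico 1 k, b j) + b k := by
          rw [Finset.sum_Ico_succ_top hk]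
        linarith
    intro k hk
    have h1 := claim1 k hk
    have h2 : ∑ j ∈ Finset.Ico 1 k, b j ≤ B := by
      rw [Finset.sum_Ico_eq_sum_range]
      have h3 : ∀ i ∈ Finset.range (k - 1), b (1 + i) = b (i + 1) := by
        intro i _; rw [Nat.add_comm]
      rw [Finset.sum_congr rfl h3]
      exact Summable.sum_le_tsum _ (fun i _ => hb0 (i+1) (Nat.le_add_left 1 i)) hbsum
    linarith
  set R : ℝ := Real.sqrt (a 1 + B) with hRdef
  set K : Set (EuclideanSpace ℝ (Fin n)) := Metric.closedBall xstar R with hKdef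
  have hxK : ∀ k, 1 ≤ k → x k ∈ K := by
    intro k hk
    rw [hKdef, Metric.mem_closedBall, dist_eq_norm]
    have h1 : ‖x k - xstar‖^2 ≤ a 1 + B := habd k hk
    have h2 : Real.sqrt (‖x k - xstar‖^2) ≤ R := Real.sqrt_le_sqrt h1
    rwa [Real.sqrt_sq (norm_nonneg _)] at h2
  have hK : IsCompact K := isCompact_closedBall _ _
  -- summability of the weighted objective gaps
  have hsumΔ : Summable (fun i : ℕ => 2 * t (i+1) * (f (x (i+1)) - f xstar)) := by
    apply summable_of_sum_range_le (c := a 1 + B)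
    · intro i
      have h1 := ht0 (i+1) (Nat.le_add_left 1 i)
      have h2 := hΔ0 (i+1) (Nat.le_add_left 1 i)
      positivity
    · intro N
      have hterm : ∀ i, 2 * t (i+1) * (f (x (i+1)) - f xstar)
          ≤ (a (i+1) - a (i+2)) + b (i+1) := by
        intro i
        have := hstep_star (i+1) (Nat.le_add_left 1 i)
        linarith
      calc ∑ i ∈ Finset.range N, 2 * t (i+1) * (f (x (i+1)) - f xstar)
          ≤ ∑ i ∈ Finset.range N, ((a (i+1) - a (i+2)) + b (i+1)) :=
            Finset.sum_le_sum (fun i _ => hterm i)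
        _ = (∑ i ∈ Finset.range N, (a (i+1) - a (i+2)))
            + ∑ i ∈ Finset.range N, b (i+1) := Finset.sum_add_distrib
        _ = (a 1 - a (N+1)) + ∑ i ∈ Finset.range N, b (i+1) := by
            rw [Finset.sum_range_sub' (fun i => a (i+1)) N]
        _ ≤ a 1 + B := by
            have h1 := ha0 (N+1)
            have h2 : ∑ i ∈ Finset.range N, b (i+1) ≤ B :=
              Summable.sum_le_tsum _ (fun i _ => hb0 (i+1) (Nat.le_add_left 1 i)) hbsum
            linarith
  -- the gap is frequently small
  have hfreqΔ : ∀ ε > 0, ∃ᶠ k in atTop, f (x k) - f xstar < ε := by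
    intro ε hε
    by_contra hcon
    rw [frequently_atTop] at hcon
    push_neg at hcon
    obtain ⟨N, hN⟩ := hcon
    have hs2 : Summable (fun i : ℕ => 2 * t (i + (N+1)) * (f (x (i + (N+1))) - f xstar)) :=
      (summable_nat_add_iff N).mpr hsumΔ
    have hcomp : Summable (fun i : ℕ => (2 * (C1*ζlo) * ε) * (1/(((i + (N+1) : ℕ)) : ℝ))) := by
      refine Summable.of_nonneg_of_le (fun i => by positivity) (fun i => ?_) hs2
      have hk1 : 1 ≤ i + (N+1) := Nat.le_add_left 1 (i + N)
      have hlb := htlb (i + (N+1)) hk1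
      have ht0' := ht0 (i + (N+1)) hk1
      have hΔge : ε ≤ f (x (i + (N+1))) - f xstar := hN (i + (N+1)) (by omega)
      have hkpos' : (0:ℝ) < ((i + (N+1) : ℕ) : ℝ) := hkpos _ hk1
      have h1 : (C1 * ζlo / ((i + (N+1) : ℕ) : ℝ)) * ε
          ≤ t (i + (N+1)) * (f (x (i + (N+1))) - f xstar) := by
        apply mul_le_mul hlb hΔge (le_of_lt hε)
        exact ht0'
      calc (2 * (C1*ζlo) * ε) * (1/(((i + (N+1) : ℕ)) : ℝ))
          = 2 * ((C1 * ζlo / ((i + (N+1) : ℕ) : ℝ)) * ε) := by ring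
        _ ≤ 2 * (t (i + (N+1)) * (f (x (i + (N+1))) - f xstar)) := by linarith
        _ = 2 * t (i + (N+1)) * (f (x (i + (N+1))) - f xstar) := by ring
    have hcne : (2 * (C1*ζlo) * ε) ≠ 0 := by positivity
    have hsum1 : Summable (fun i : ℕ => 1/(((i + (N+1) : ℕ)) : ℝ)) :=
      (summable_mul_left_iff hcne).mp hcomp
    have hsum2 : Summable (fun i : ℕ => 1/((i : ℕ) : ℝ)) :=
      (summable_nat_add_iff (N+1)).mp hsum1
    exact Real.not_summable_one_div_natCast hsum2
  -- extract a subsequence converging to a minimizer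
  have hP : ∀ m : ℕ, ∃ᶠ k in atTop, 1 ≤ k ∧ f (x k) - f xstar < 1/((m:ℝ)+1) := by
    intro m
    have h1 : (0:ℝ) < 1/((m:ℝ)+1) := by positivity
    exact ((hfreqΔ _ h1).and_eventually (eventually_ge_atTop 1)).mono
      (fun k hk => ⟨hk.2, hk.1⟩)
  obtain ⟨φ, hφmono, hφ⟩ := Filter.extraction_forall_of_frequently hP
  have hu : ∀ m, x (φ m) ∈ K := fun m => hxK _ (hφ m).1
  obtain ⟨xhat, hxhatK, ψ, hψmono, hψtend⟩ := hK.tendsto_subseq hu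
  have hψtend' : Tendsto (fun m => x (φ (ψ m))) atTop (nhds xhat) := hψtend
  have hxhatΩ : xhat ∈ Ω :=
    hΩclosed.mem_of_tendsto hψtend' (Eventually.of_forall fun m => hxΩ _ (hφ (ψ m)).1)
  have hfxhat : f xhat = f xstar := by
    have h1 : Tendsto (fun m => f (x (φ (ψ m)))) atTop (nhds (f xhat)) :=
      (hfcont.tendsto xhat).comp hψtend'
    have hup : Tendsto (fun m => f xstar + 1/((ψ m : ℝ)+1)) atTop (nhds (f xstar)) := by
      have h2 : Tendsto (fun m => 1/((ψ m : ℝ)+1)) atTop (nhds 0) :=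
        tendsto_one_div_add_atTop_nhds_zero_nat.comp hψmono.tendsto_atTop
      have := tendsto_const_nhds (x := f xstar) (f := atTop (α := ℕ)) |>.add h2
      simpa using this
    have h2 : Tendsto (fun m => f (x (φ (ψ m)))) atTop (nhds (f xstar)) := by
      apply tendsto_of_tendsto_of_tendsto_of_le_of_le tendsto_const_nhds hup
      · intro m
        exact hmin _ (hxΩ _ (hφ (ψ m)).1)
      · intro m
        have := (hφ (ψ m)).2
        linarith
    exact tendsto_nhds_unique h1 h2
  -- final phase: quasi-Fejér convergence to xhat
  set e' : ℕ → ℝ := fun k => |fk k (x k) - f (x k)| + |fk k xhat - f xhat| with he'def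
  have he'0 : ∀ k, 0 ≤ e' k := by intro k; simp only [he'def]; positivity
  have hbdd : ∀ k : ℕ, BddAbove ((fun z => |fk k z - f z|) '' K) := by
    intro k
    have hcontk : Continuous (fk k) := by
      have := (hfkconv k).continuousOn isOpen_univ
      rwa [← continuousOn_univ]
    exact ((hK.image ((hcontk.sub hfcont).abs)).bddAbove)
  have hsK := huccsum K hK
  have he'sum : Summable (fun k : ℕ => e' k / k) := by
    refine Summable.of_nonneg_of_le (fun k => div_nonneg (he'0 k) (Nat.cast_nonneg k))
      (fun k => ?_) (hsK.mul_left 2)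
    rcases Nat.eq_zero_or_pos k with h0 | hpos
    · subst h0; simp
    · have hk1 : (0:ℝ) < (k:ℝ) := hkpos k hpos
      have h1 : |fk k (x k) - f (x k)| ≤ sSup ((fun z => |fk k z - f z|) '' K) :=
        le_csSup (hbdd k) (Set.mem_image_of_mem _ (hxK k hpos))
      have h2 : |fk k xhat - f xhat| ≤ sSup ((fun z => |fk k z - f z|) '' K) :=
        le_csSup (hbdd k) (Set.mem_image_of_mem _ hxhatK)
      have h3 : e' k ≤ 2 * sSup ((fun z => |fk k z - f z|) '' K) := by
        simp only [he'def]; linarith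
      calc e' k / k ≤ (2 * sSup ((fun z => |fk k z - f z|) '' K)) / k :=
            (div_le_div_iff_of_pos_right hk1).mpr h3
        _ = 2 * (1/(k:ℝ) * sSup ((fun z => |fk k z - f z|) '' K)) := by ring
  set b' : ℕ → ℝ := fun k => 2 * t k * e' k + t k ^ 2 * G ^ 2 with hb'def
  have hb'0 : ∀ k, 1 ≤ k → 0 ≤ b' k := by
    intro k hk
    have := ht0 k hk
    have := he'0 k
    simp only [hb'def]
    positivity
  have hb'sum : Summable (fun k => b' (k+1)) := hbsum_gen e' he'0 he'sum
  set a' : ℕ → ℝ := fun k => ‖x k - xhat‖^2 with ha'def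
  have ha'0 : ∀ k, 0 ≤ a' k := fun k => sq_nonneg _
  have hstep' : ∀ k, 1 ≤ k → a' (k+1) ≤ a' k + b' k := by
    intro k hk
    have h1 := key k hk xhat hxhatΩ
    have h2 : 0 ≤ f (x k) - f xhat := by
      rw [hfxhat]; exact hΔ0 k hk
    have h3 := ht0 k hk
    simp only [ha'def, hb'def, he'def]
    nlinarith [h1]
  have hfreq' : ∀ ε > 0, ∃ᶠ k in atTop, a' k < ε := by
    intro ε hε
    have h1 : Tendsto (fun m => a' (φ (ψ m))) atTop (nhds 0) := by
      have h2 : Tendsto (fun m => ‖x (φ (ψ m)) - xhat‖^2) atTop (nhds (‖xhat - xhat‖^2)) := by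
        have hc : Continuous (fun z : EuclideanSpace ℝ (Fin n) => ‖z - xhat‖^2) :=
          ((continuous_id.sub continuous_const).norm).pow 2
        exact (hc.tendsto xhat).comp hψtend'
      simpa using h2
    rw [frequently_atTop]
    intro N
    obtain ⟨M, hM⟩ := (Metric.tendsto_atTop.mp h1) ε hε
    set m := max M N with hmdef
    refine ⟨φ (ψ m), ?_, ?_⟩
    · calc N ≤ m := le_max_right _ _
        _ ≤ ψ m := hψmono.le_apply
        _ ≤ φ (ψ m) := hφmono.le_apply
    · have := hM m (le_max_left _ _)
      rw [Real.dist_eq, sub_zero, abs_of_nonneg (ha'0 _)] at this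
      exact this
  have hfin : Tendsto a' atTop (nhds 0) :=
    aux_quasi_fejer a' b' ha'0 hb'0 hb'sum hstep' hfreq'
  have htendx : Tendsto x atTop (nhds xhat) := by
    rw [tendsto_iff_norm_sub_tendsto_zero]
    have h1 : Tendsto (fun k => Real.sqrt (a' k)) atTop (nhds (Real.sqrt 0)) :=
      (Real.continuous_sqrt.tendsto 0).comp hfin
    have h2 : (fun k => Real.sqrt (a' k)) = fun k => ‖x k - xhat‖ := by
      funext k
      simp only [ha'def]
      exact Real.sqrt_sq (norm_nonneg _)
    rw [h2] at h1
    simpa using h1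
  exact ⟨xhat, hxhatΩ, hfxhat, htendx⟩
end
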